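/- arXiv:1305.5357 — 3 statements merged into one kernel-verified Lean document; each statement's English description precedes it below -/
import Mathlib

section
/- For all integers n ≥ 1 and 1 ≤ k ≤ n, the number of linked partitions of [n] with exactly k blocks equals the number of permutations of [n] with exactly k−1 descents. -/
/-- `P` is a linked partition of `[n] = {1,…,n}`: a collection of nonempty
subsets of `[n]` whose union is `[n]`, any two distinct blocks being nearly
disjoint. -/
def IsLinkedPartition (n : ℕ) (P : Finset (Finset ℕ)) : Prop :=
  (∀ B ∈ P, B.Nonempty ∧ B ⊆ Finset.Icc 1 n) ∧
  (∀ x ∈ Finset.Icc 1 n, ∃ B ∈ P, x ∈ B) ∧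
  (∀ B ∈ P, ∀ C ∈ P, B ≠ C → ∀ x ∈ B ∩ C,
    ((∀ y ∈ B, x ≤ y) ∧ 1 < B.card ∧ (∃ y ∈ C, y < x)) ∨
    ((∀ y ∈ C, x ≤ y) ∧ 1 < C.card ∧ (∃ y ∈ B, y < x)))

/-- In the linear representation there is an arc `(i, j)` iff `i < j` and some
block `B ∈ P` has minimum `i` and contains `j`. -/
def IsArc (P : Finset (Finset ℕ)) (i j : ℕ) : Prop :=
  i < j ∧ ∃ B ∈ P, i ∈ B ∧ j ∈ B ∧ ∀ y ∈ B, i ≤ y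

def IsLeftEndpoint (P : Finset (Finset ℕ)) (x : ℕ) : Prop := ∃ j, IsArc P x j

def IsRightEndpoint (P : Finset (Finset ℕ)) (x : ℕ) : Prop := ∃ i, IsArc P i x

/-- An origin is only a left-hand endpoint. -/
def IsOrigin (P : Finset (Finset ℕ)) (x : ℕ) : Prop :=
  IsLeftEndpoint P x ∧ ¬ IsRightEndpoint P x

/-- A transient is both a left-hand and a right-hand endpoint. -/
def IsTransient (P : Finset (Finset ℕ)) (x : ℕ) : Prop :=
  IsLeftEndpoint P x ∧ IsRightEndpoint P x

/-- A destination is only a right-hand endpoint. -/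
def IsDestination (P : Finset (Finset ℕ)) (x : ℕ) : Prop :=
  ¬ IsLeftEndpoint P x ∧ IsRightEndpoint P x

/-- A singleton is an isolated vertex of `[n]`. -/
def IsSingletonVertex (n : ℕ) (P : Finset (Finset ℕ)) (x : ℕ) : Prop :=
  x ∈ Finset.Icc 1 n ∧ ¬ IsLeftEndpoint P x ∧ ¬ IsRightEndpoint P x

/-- No two arcs cross: there are no arcs `(i₁,j₁)`, `(i₂,j₂)` with
`i₁ < i₂ < j₁ < j₂`. -/
def NoncrossingLP (P : Finset (Finset ℕ)) : Prop :=
  ¬ ∃ i₁ i₂ j₁ j₂ : ℕ, IsArc P i₁ j₁ ∧ IsArc P i₂ j₂ ∧ i₁ < i₂ ∧ i₂ < j₁ ∧ j₁ < j₂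

/-- No two arcs nest: there are no arcs `(i₁,j₁)`, `(i₂,j₂)` with
`i₁ < i₂ < j₂ < j₁`. -/
def NonnestingLP (P : Finset (Finset ℕ)) : Prop :=
  ¬ ∃ i₁ i₂ j₁ j₂ : ℕ, IsArc P i₁ j₁ ∧ IsArc P i₂ j₂ ∧ i₁ < i₂ ∧ i₂ < j₂ ∧ j₂ < j₁

/-- The set of descent positions of a permutation `π₁ ⋯ π_n` (0-indexed:
`i` is a descent iff `π (i+1) < π i`). -/
def descentSet {n : ℕ} (π : Equiv.Perm (Fin n)) : Set (Fin n) :=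
  {i | ∃ h : (i : ℕ) + 1 < n, π ⟨(i : ℕ) + 1, h⟩ < π i}

/-- A permutation tableau of length `n`, encoded via the boundary labeling by
`1,…,n` from the top-right corner to the bottom-left corner (label `m`
corresponds to `(⟨m-1, _⟩ : Fin n)`).  `isRow i = true` iff label `i` labels a
row (the label `1` always labels a row).  The cells of the Ferrers diagram are
exactly the pairs (row `i`, column `j`) with `i < j`; rows above have smaller
labels and columns to the left have larger labels.  `filling i j = true`
records that the cell in row `i` and column `j` exists and contains a `1`
(cells containing `0` and non-cells are `false`).  Every column contains at
least one `1`, and no cell containing a `0` has both a `1` above it in its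
column and a `1` to its left in its row. -/
structure PermTableau (n : ℕ) where
  isRow : Fin n → Bool
  filling : Fin n → Fin n → Bool
  first_row : ∀ h : 0 < n, isRow ⟨0, h⟩ = true
  filling_cells : ∀ i j : Fin n, filling i j = true →
    isRow i = true ∧ isRow j = false ∧ i < j
  col_has_one : ∀ j : Fin n, isRow j = false → ∃ i : Fin n, filling i j = true
  no_bad_zero : ∀ i j : Fin n, isRow i = true → isRow j = false → i < j →
    (∃ i' : Fin n, i' < i ∧ filling i' j = true) →
    (∃ j' : Fin n, j < j' ∧ filling i j' = true) →
    filling i j = true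

namespace PermTableau

variable {n : ℕ}

/-- The diagram has a cell in row `i` and column `j` iff `i < j`. -/
def IsCell (T : PermTableau n) (i j : Fin n) : Prop :=
  T.isRow i = true ∧ T.isRow j = false ∧ i < j

/-- The number of rows. -/
noncomputable def numRows (T : PermTableau n) : ℕ := {i : Fin n | T.isRow i = true}.ncard

/-- The number of columns. -/
noncomputable def numCols (T : PermTableau n) : ℕ := {j : Fin n | T.isRow j = false}.ncard

/-- The cell in row `i`, column `j` contains a topmost `1`: it contains a `1`
and no cell above it in column `j` contains a `1`. -/
def TopmostOne (T : PermTableau n) (i j : Fin n) : Prop :=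
  T.filling i j = true ∧ ∀ i' : Fin n, i' < i → T.filling i' j = false

/-- The cell in row `i`, column `j` contains a restricted `0`: it contains a
`0` and some cell above it in column `j` contains a `1`. -/
def RestrictedZero (T : PermTableau n) (i j : Fin n) : Prop :=
  T.IsCell i j ∧ T.filling i j = false ∧ ∃ i' : Fin n, i' < i ∧ T.filling i' j = true

/-- A rightmost restricted `0` is a restricted `0` that is rightmost (minimal
column label) among the restricted `0`'s in its row. -/
def RightmostRestrictedZero (T : PermTableau n) (i j : Fin n) : Prop :=
  T.RestrictedZero i j ∧ ∀ j' : Fin n, T.RestrictedZero i j' → j ≤ j'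

/-- A cell is dotted if it contains a topmost `1` or a rightmost restricted `0`. -/
def Dotted (T : PermTableau n) (i j : Fin n) : Prop :=
  T.TopmostOne i j ∨ T.RightmostRestrictedZero i j

/-- `T` avoids the pattern `J₂`. -/
def AvoidsJ2 (T : PermTableau n) : Prop :=
  ¬ ∃ i₁ i₂ j₁ j₂ : Fin n,
    T.isRow i₁ = true ∧ T.isRow i₂ = true ∧ T.isRow j₁ = false ∧ T.isRow j₂ = false ∧
    i₁ < i₂ ∧ i₂ < j₁ ∧ j₁ < j₂ ∧
    T.Dotted i₁ j₁ ∧ T.Dotted i₂ j₂ ∧ ¬ T.Dotted i₂ j₁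

/-- `T` avoids the pattern `I₂`. -/
def AvoidsI2 (T : PermTableau n) : Prop :=
  ¬ ∃ i₁ i₂ j₁ j₂ : Fin n,
    T.isRow i₁ = true ∧ T.isRow i₂ = true ∧ T.isRow j₁ = false ∧ T.isRow j₂ = false ∧
    i₁ < i₂ ∧ i₂ < j₁ ∧ j₁ < j₂ ∧
    T.Dotted i₁ j₂ ∧ T.Dotted i₂ j₁ ∧ ¬ T.Dotted i₂ j₂

end PermTableau

open Finset

/-- descents as a set of naturals -/
def dset {m : ℕ} (π : Equiv.Perm (Fin m)) : Set ℕ :=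
  {i | ∃ h : i + 1 < m, π ⟨i + 1, h⟩ < π ⟨i, by omega⟩}

noncomputable def nDes {m : ℕ} (π : Equiv.Perm (Fin m)) : ℕ := (dset π).ncard

lemma dset_subset {m : ℕ} (π : Equiv.Perm (Fin m)) : dset π ⊆ Set.Iio (m - 1) := by
  rintro i ⟨h, -⟩; simp only [Set.mem_Iio]; omega

lemma dset_finite {m : ℕ} (π : Equiv.Perm (Fin m)) : (dset π).Finite :=
  (Set.finite_Iio _).subset (dset_subset π)

lemma ncard_Iio_nat (m : ℕ) : (Set.Iio m).ncard = m := by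
  rw [← Finset.coe_Iio, Set.ncard_coe_finset, Nat.card_Iio]

lemma nDes_le {m : ℕ} (π : Equiv.Perm (Fin m)) : nDes π ≤ m - 1 := by
  have := Set.ncard_le_ncard (dset_subset π) (Set.finite_Iio _)
  rwa [ncard_Iio_nat] at this

lemma descentSet_ncard {m : ℕ} (π : Equiv.Perm (Fin m)) :
    (descentSet π).ncard = nDes π := by
  have h : dset π = Fin.val '' descentSet π := by
    ext i
    constructor
    · rintro ⟨h, hlt⟩
      exact ⟨⟨i, by omega⟩, ⟨h, hlt⟩, rfl⟩
    · rintro ⟨⟨j, hj⟩, ⟨h, hlt⟩, rfl⟩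
      exact ⟨h, hlt⟩
  rw [nDes, h, Set.ncard_image_of_injective _ Fin.val_injective]

def insPerm {n : ℕ} (σ : Equiv.Perm (Fin n)) (p : Fin (n + 1)) : Equiv.Perm (Fin (n + 1)) :=
  (finSuccEquiv' p).trans ((Equiv.optionCongr σ).trans (finSuccEquiv' (Fin.last n)).symm)

lemma insPerm_self {n : ℕ} (σ : Equiv.Perm (Fin n)) (p : Fin (n + 1)) :
    insPerm σ p p = Fin.last n := by
  simp [insPerm]

lemma insPerm_succAbove {n : ℕ} (σ : Equiv.Perm (Fin n)) (p : Fin (n + 1)) (j : Fin n) :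
    insPerm σ p (p.succAbove j) = Fin.castSucc (σ j) := by
  simp [insPerm, finSuccEquiv'_succAbove, finSuccEquiv'_symm_some, Fin.succAbove_last]

lemma insPerm_lt {n : ℕ} (σ : Equiv.Perm (Fin n)) (p : Fin (n + 1)) (i : Fin (n + 1))
    (h : (i : ℕ) < (p : ℕ)) :
    insPerm σ p i = Fin.castSucc (σ ⟨(i : ℕ), by omega⟩) := by
  have hj : Fin.castSucc (⟨(i : ℕ), by omega⟩ : Fin n) < p := by
    simp only [Fin.lt_def, Fin.coe_castSucc]; exact h
  have hi : p.succAbove ⟨(i : ℕ), by omega⟩ = i :=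
    (Fin.succAbove_of_castSucc_lt p _ hj).trans (Fin.ext rfl)
  exact (congrArg (insPerm σ p) hi.symm).trans (insPerm_succAbove σ p ⟨(i : ℕ), by omega⟩)

lemma insPerm_gt {n : ℕ} (σ : Equiv.Perm (Fin n)) (p : Fin (n + 1)) (i : Fin (n + 1))
    (h : (p : ℕ) < (i : ℕ)) :
    insPerm σ p i = Fin.castSucc (σ ⟨(i : ℕ) - 1, by omega⟩) := by
  have hj : p ≤ Fin.castSucc (⟨(i : ℕ) - 1, by omega⟩ : Fin n) := by
    simp only [Fin.le_def, Fin.coe_castSucc]; omega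
  have hi : p.succAbove ⟨(i : ℕ) - 1, by omega⟩ = i :=
    (Fin.succAbove_of_le_castSucc p _ hj).trans (Fin.ext (show (i:ℕ) - 1 + 1 = i by omega))
  exact (congrArg (insPerm σ p) hi.symm).trans (insPerm_succAbove σ p ⟨(i : ℕ) - 1, by omega⟩)

lemma insPerm_lt' {n : ℕ} (σ : Equiv.Perm (Fin n)) (p : Fin (n + 1)) (a : ℕ) (ha : a < n + 1)
    (h : a < (p : ℕ)) : insPerm σ p ⟨a, ha⟩ = Fin.castSucc (σ ⟨a, by omega⟩) :=
  insPerm_lt σ p ⟨a, ha⟩ h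

lemma insPerm_gt' {n : ℕ} (σ : Equiv.Perm (Fin n)) (p : Fin (n + 1)) (a : ℕ) (ha : a < n + 1)
    (h : (p : ℕ) < a) : insPerm σ p ⟨a, ha⟩ = Fin.castSucc (σ ⟨a - 1, by omega⟩) :=
  insPerm_gt σ p ⟨a, ha⟩ h

def shiftF (p : ℕ) (i : ℕ) : ℕ := if i < p then i else i + 1

lemma shiftF_inj (p : ℕ) : Function.Injective (shiftF p) := by
  intro a b
  unfold shiftF; split_ifs <;> omega

lemma dset_insPerm {n : ℕ} (σ : Equiv.Perm (Fin n)) (p : Fin (n + 1)) :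
    dset (insPerm σ p) =
      shiftF (p : ℕ) '' {i ∈ dset σ | i + 1 ≠ (p : ℕ)} ∪
        (if (p : ℕ) < n then {(p : ℕ)} else ∅) := by
  ext i
  simp only [Set.mem_union, Set.mem_image, Set.mem_setOf_eq]
  constructor
  · rintro ⟨h1, hlt⟩
    rcases lt_trichotomy (i + 1) (p : ℕ) with hip | hip | hip
    · have e1 := insPerm_lt' σ p (i+1) h1 hip
      have e2 := insPerm_lt' σ p i (by omega) (by omega)
      rw [e1, e2, Fin.castSucc_lt_castSucc_iff] at hlt
      have hb : i + 1 < n := by have := p.isLt; omega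
      refine Or.inl ⟨i, ⟨⟨hb, hlt⟩, by omega⟩, ?_⟩
      unfold shiftF; rw [if_pos (by omega)]
    · exfalso
      have he : (⟨i + 1, h1⟩ : Fin (n + 1)) = p := Fin.ext hip
      rw [he, insPerm_self] at hlt
      exact absurd hlt (Fin.le_last _).not_gt
    · rcases lt_trichotomy i (p : ℕ) with hi2 | hi2 | hi2
      · omega
      · refine Or.inr ?_
        have hpn : (p : ℕ) < n := by omega
        rw [if_pos hpn]
        exact Set.mem_singleton_iff.mpr hi2
      · have e1 := insPerm_gt' σ p (i+1) h1 (by omega)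
        have e2 := insPerm_gt' σ p i (by omega) hi2
        rw [e1, e2, Fin.castSucc_lt_castSucc_iff] at hlt
        have hb : (i - 1) + 1 < n := by omega
        have he1 : (⟨(i:ℕ) + 1 - 1, by omega⟩ : Fin n) = ⟨(i - 1) + 1, hb⟩ :=
          Fin.ext (show i + 1 - 1 = (i - 1) + 1 by omega)
        rw [he1] at hlt
        refine Or.inl ⟨i - 1, ⟨⟨hb, hlt⟩, by omega⟩, ?_⟩
        unfold shiftF; rw [if_neg (by omega)]; omega
  · rintro (⟨j, ⟨⟨hj1, hjd⟩, hjp⟩, rfl⟩ | hi)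
    · by_cases hjlt : j < (p : ℕ)
      · have hs : shiftF (p : ℕ) j = j := by unfold shiftF; rw [if_pos hjlt]
        rw [hs]
        have h1 : j + 1 < n + 1 := by omega
        refine ⟨h1, ?_⟩
        have e1 := insPerm_lt' σ p (j+1) h1 (by omega)
        have e2 := insPerm_lt' σ p j (by omega) hjlt
        rw [e1, e2, Fin.castSucc_lt_castSucc_iff]
        exact hjd
      · have hs : shiftF (p : ℕ) j = j + 1 := by unfold shiftF; rw [if_neg hjlt]
        rw [hs]
        have h1 : (j + 1) + 1 < n + 1 := by omega
        refine ⟨h1, ?_⟩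
        have e1 := insPerm_gt' σ p ((j+1)+1) h1 (by omega)
        have e2 := insPerm_gt' σ p (j+1) (by omega) (by omega)
        rw [e1, e2, Fin.castSucc_lt_castSucc_iff]
        have he1 : (⟨(j + 1) + 1 - 1, by omega⟩ : Fin n) = ⟨j + 1, hj1⟩ := Fin.ext (show (j+1)+1-1 = j+1 by omega)
        have he2 : (⟨j + 1 - 1, by omega⟩ : Fin n) = ⟨j, by omega⟩ := Fin.ext (show j+1-1 = j by omega)
        rw [he1, he2]
        exact hjd
    · have hpn : (p : ℕ) < n := by by_contra h; simp [h] at hi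
      rw [if_pos hpn, Set.mem_singleton_iff] at hi
      subst hi
      have h1 : (p:ℕ) + 1 < n + 1 := by omega
      refine ⟨h1, ?_⟩
      have he : (⟨(p:ℕ), by omega⟩ : Fin (n+1)) = p := Fin.ext rfl
      have e1 := insPerm_gt' σ p ((p:ℕ)+1) h1 (by omega)
      rw [he, insPerm_self, e1]
      exact Fin.castSucc_lt_last _

def permG {n : ℕ} (σ : Equiv.Perm (Fin n)) : Set ℕ := {n} ∪ (· + 1) '' dset σ

lemma permG_sub {n : ℕ} (σ : Equiv.Perm (Fin n)) : permG σ ⊆ Set.Iio (n + 1) := by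
  rintro x (hx | ⟨i, hi, rfl⟩)
  · simp only [Set.mem_singleton_iff] at hx; simp [hx]
  · obtain ⟨h, -⟩ := hi; simp only [Set.mem_Iio]; omega

lemma permG_card {n : ℕ} (σ : Equiv.Perm (Fin n)) : (permG σ).ncard = nDes σ + 1 := by
  rw [permG, Set.ncard_union_eq ?disj (Set.finite_singleton _) ((dset_finite σ).image _),
    Set.ncard_singleton, Set.ncard_image_of_injective _ (add_left_injective 1), add_comm]
  · rfl
  case disj =>
    rw [Set.disjoint_left]
    rintro x hx ⟨i, ⟨hi, -⟩, rfl⟩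
    simp only [Set.mem_singleton_iff] at hx
    omega

lemma mem_permG {n : ℕ} (σ : Equiv.Perm (Fin n)) (x : ℕ) :
    x ∈ permG σ ↔ (x = n ∨ ∃ i ∈ dset σ, i + 1 = x) := by
  simp only [permG, Set.mem_union, Set.mem_singleton_iff, Set.mem_image]

open scoped Classical in
lemma nDes_insPerm {n : ℕ} (σ : Equiv.Perm (Fin n)) (p : Fin (n + 1)) :
    nDes (insPerm σ p) = if (p : ℕ) ∈ permG σ then nDes σ else nDes σ + 1 := by
  have hfin : (dset σ).Finite := dset_finite σ
  have hSfin : ({i ∈ dset σ | i + 1 ≠ (p : ℕ)}).Finite := hfin.subset (fun x hx => hx.1)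
  rw [nDes, dset_insPerm, mem_permG]
  by_cases hpn : (p : ℕ) = n
  · -- p = n : no new descent, nothing removed
    rw [if_pos (Or.inl hpn)]
    have hS : {i ∈ dset σ | i + 1 ≠ (p : ℕ)} = dset σ := by
      ext i; simp only [Set.mem_setOf_eq, and_iff_left_iff_imp]
      rintro ⟨h, -⟩; omega
    rw [if_neg (by omega), Set.union_empty, hS,
      Set.ncard_image_of_injective _ (shiftF_inj _)]
    rfl
  · have hpn' : (p : ℕ) < n := by have := p.isLt; omega
    rw [if_pos hpn']
    have hdisj : Disjoint (shiftF (p : ℕ) '' {i ∈ dset σ | i + 1 ≠ (p : ℕ)}) {(p : ℕ)} := by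
      rw [Set.disjoint_right]
      rintro x hx ⟨i, ⟨hi, hne⟩, rfl⟩
      simp only [Set.mem_singleton_iff] at hx
      unfold shiftF at hx
      split_ifs at hx <;> omega
    rw [Set.ncard_union_eq hdisj (hSfin.image _) (Set.finite_singleton _),
      Set.ncard_singleton, Set.ncard_image_of_injective _ (shiftF_inj _)]
    by_cases hex : ∃ i ∈ dset σ, i + 1 = (p : ℕ)
    · rw [if_pos (Or.inr hex)]
      obtain ⟨i0, hi0, hi0p⟩ := hex
      have hS : {i ∈ dset σ | i + 1 ≠ (p : ℕ)} = dset σ \ {i0} := by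
        ext i
        simp only [Set.mem_setOf_eq, Set.mem_diff, Set.mem_singleton_iff]
        constructor
        · rintro ⟨h1, h2⟩; exact ⟨h1, by omega⟩
        · rintro ⟨h1, h2⟩; exact ⟨h1, by omega⟩
      rw [hS]
      have := Set.ncard_diff_singleton_add_one hi0 hfin
      unfold nDes
      omega
    · rw [if_neg (by
        rintro (h | ⟨i, hi, hip⟩)
        · exact hpn h
        · exact hex ⟨i, hi, hip⟩)]
      have hS : {i ∈ dset σ | i + 1 ≠ (p : ℕ)} = dset σ := by
        ext i; simp only [Set.mem_setOf_eq, and_iff_left_iff_imp]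
        intro h1
        intro hc
        exact hex ⟨i, h1, hc⟩
      rw [hS]; rfl

lemma insPerm_injective {n : ℕ} :
    Function.Injective (fun x : Equiv.Perm (Fin n) × Fin (n + 1) => insPerm x.1 x.2) := by
  rintro ⟨σ, p⟩ ⟨σ', p'⟩ h
  simp only at h
  have hpp : p = p' := by
    by_contra hne
    obtain ⟨j, hj⟩ := Fin.exists_succAbove_eq hne
    have h1 : insPerm σ p p = Fin.last n := insPerm_self σ p
    have h2 : insPerm σ' p' p = Fin.castSucc (σ' j) := by rw [← hj, insPerm_succAbove]
    rw [h] at h1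
    rw [h1] at h2
    exact absurd h2.symm (Fin.castSucc_lt_last (σ' j)).ne
  subst hpp
  have hσ : σ = σ' := by
    apply Equiv.ext
    intro j
    have h1 : insPerm σ p (p.succAbove j) = Fin.castSucc (σ j) := insPerm_succAbove σ p j
    have h2 : insPerm σ' p (p.succAbove j) = Fin.castSucc (σ' j) := insPerm_succAbove σ' p j
    rw [h] at h1
    rw [h1] at h2
    first
    | exact Fin.castSucc_injective n h2
    | exact (Fin.castSucc_injective n h2).symm
  rw [hσ]

noncomputable def permEquiv (n : ℕ) :
    Equiv.Perm (Fin n) × Fin (n + 1) ≃ Equiv.Perm (Fin (n + 1)) := by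
  apply Equiv.ofBijective (fun x : Equiv.Perm (Fin n) × Fin (n + 1) => insPerm x.1 x.2)
  rw [Fintype.bijective_iff_injective_and_card]
  refine ⟨insPerm_injective, ?_⟩
  rw [Fintype.card_prod, Fintype.card_perm, Fintype.card_perm, Fintype.card_fin,
    Fintype.card_fin, Nat.factorial_succ]
  ring

lemma permEquiv_apply {n : ℕ} (σ : Equiv.Perm (Fin n)) (p : Fin (n + 1)) :
    permEquiv n (σ, p) = insPerm σ p := rfl

-- reversal
lemma dset_mul_rev {n : ℕ} (π : Equiv.Perm (Fin n)) :
    dset (π * Fin.revPerm) = (fun j => n - 2 - j) '' (Set.Iio (n - 1) \ dset π) := by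
  ext i
  simp only [Set.mem_image, Set.mem_diff, Set.mem_Iio]
  constructor
  · rintro ⟨h1, hlt⟩
    rw [Equiv.Perm.mul_apply, Equiv.Perm.mul_apply] at hlt
    have hr1 : Fin.revPerm (⟨i + 1, h1⟩ : Fin n) = ⟨n - 2 - i, by omega⟩ := by
      apply Fin.ext
      simp only [Fin.revPerm_apply, Fin.val_rev]
      omega
    have hr2 : Fin.revPerm (⟨i, by omega⟩ : Fin n) = ⟨(n - 2 - i) + 1, by omega⟩ := by
      apply Fin.ext
      simp only [Fin.revPerm_apply, Fin.val_rev]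
      omega
    rw [hr1, hr2] at hlt
    refine ⟨n - 2 - i, ⟨by omega, ?_⟩, by omega⟩
    rintro ⟨h2, hd⟩
    have : (⟨(n - 2 - i) + 1, h2⟩ : Fin n) = ⟨(n-2-i) + 1, by omega⟩ := rfl
    rw [this] at hd
    exact absurd hlt (asymm hd)
  · rintro ⟨j, ⟨hj1, hj2⟩, rfl⟩
    have h1 : (n - 2 - j) + 1 < n := by omega
    refine ⟨h1, ?_⟩
    rw [Equiv.Perm.mul_apply, Equiv.Perm.mul_apply]
    have hr1 : Fin.revPerm (⟨(n - 2 - j) + 1, h1⟩ : Fin n) = ⟨j, by omega⟩ := by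
      apply Fin.ext
      simp only [Fin.revPerm_apply, Fin.val_rev]
      omega
    have hr2 : Fin.revPerm (⟨n - 2 - j, by omega⟩ : Fin n) = ⟨j + 1, by omega⟩ := by
      apply Fin.ext
      simp only [Fin.revPerm_apply, Fin.val_rev]
      omega
    rw [hr1, hr2]
    have hne : π ⟨j, by omega⟩ ≠ π ⟨j + 1, by omega⟩ := by
      intro hc
      have := π.injective hc
      rw [Fin.mk.injEq] at this
      omega
    have hnd : ¬ (π ⟨j + 1, by omega⟩ < π ⟨j, by omega⟩) := by
      intro hc
      exact hj2 ⟨by omega, hc⟩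
    rcases lt_or_eq_of_le (le_of_not_gt hnd) with hlt | heq
    · exact hlt
    · exact absurd heq hne

abbrev Code (n : ℕ) : Type := ∀ j : Fin n, Fin ((j : ℕ) + 1)

def pureSet {n : ℕ} (g : Code n) : Set ℕ :=
  {j | ∃ hj : j < n, (g ⟨j, hj⟩ : ℕ) ≠ 0 ∧ ∀ j' : Fin n, (g j' : ℕ) ≠ j + 1}

noncomputable def pureNum {n : ℕ} (g : Code n) : ℕ := (pureSet g).ncard

lemma pureSet_sub {n : ℕ} (g : Code n) : pureSet g ⊆ Set.Iio n := by
  rintro j ⟨hj, -⟩; exact hj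

lemma pureSet_finite {n : ℕ} (g : Code n) : (pureSet g).Finite :=
  (Set.finite_Iio _).subset (pureSet_sub g)

lemma pureNum_le {n : ℕ} (g : Code n) : pureNum g ≤ n := by
  have := Set.ncard_le_ncard (pureSet_sub g) (Set.finite_Iio _)
  rwa [ncard_Iio_nat] at this

def codeEquiv (n : ℕ) : Code n × Fin (n + 1) ≃ Code (n + 1) :=
  { toFun := fun x => Fin.snoc x.1 x.2
    invFun := fun g => (fun j => g (Fin.castSucc j), g (Fin.last n))
    left_inv := by
      rintro ⟨g, v⟩
      dsimp only
      congr 1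
      · funext j
        exact Fin.snoc_castSucc (α := fun i : Fin (n+1) => Fin ((i : ℕ) + 1)) v g j
      · exact Fin.snoc_last (α := fun i : Fin (n+1) => Fin ((i : ℕ) + 1)) v g
    right_inv := by
      intro g
      dsimp only
      funext i
      induction i using Fin.lastCases with
      | last => exact Fin.snoc_last (α := fun i : Fin (n+1) => Fin ((i : ℕ) + 1)) _ _
      | cast j => exact Fin.snoc_castSucc (α := fun i : Fin (n+1) => Fin ((i : ℕ) + 1)) _ _ j }

lemma codeEquiv_castSucc {n : ℕ} (g : Code n) (v : Fin (n + 1)) (j : Fin n) :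
    codeEquiv n (g, v) (Fin.castSucc j) = g j := by
  simp only [codeEquiv, Equiv.coe_fn_mk]
  exact Fin.snoc_castSucc (α := fun i : Fin (n+1) => Fin ((i : ℕ) + 1)) v g j

lemma codeEquiv_last {n : ℕ} (g : Code n) (v : Fin (n + 1)) :
    codeEquiv n (g, v) (Fin.last n) = v := by
  simp only [codeEquiv, Equiv.coe_fn_mk]
  exact Fin.snoc_last (α := fun i : Fin (n+1) => Fin ((i : ℕ) + 1)) v g

lemma codeEquiv_mk {n : ℕ} (g : Code n) (v : Fin (n + 1)) (j : ℕ) (hj : j < n) :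
    (codeEquiv n (g, v) ⟨j, by omega⟩ : ℕ) = (g ⟨j, hj⟩ : ℕ) := by
  have h : (⟨j, by omega⟩ : Fin (n + 1)) = Fin.castSucc ⟨j, hj⟩ := Fin.ext rfl
  rw [h]
  exact congrArg Fin.val (codeEquiv_castSucc g v ⟨j, hj⟩)

lemma codeEquiv_lastval {n : ℕ} (g : Code n) (v : Fin (n + 1)) :
    (codeEquiv n (g, v) ⟨n, by omega⟩ : ℕ) = (v : ℕ) := by
  have h : (⟨n, by omega⟩ : Fin (n + 1)) = Fin.last n := Fin.ext rfl
  rw [h]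
  exact congrArg Fin.val (codeEquiv_last g v)

def codeG {n : ℕ} (g : Code n) : Set ℕ := {0} ∪ (· + 1) '' pureSet g

lemma codeG_sub {n : ℕ} (g : Code n) : codeG g ⊆ Set.Iio (n + 1) := by
  rintro x (hx | ⟨j, hj, rfl⟩)
  · simp only [Set.mem_singleton_iff] at hx; simp [hx]
  · obtain ⟨h, -⟩ := hj; simp only [Set.mem_Iio]; omega

lemma codeG_card {n : ℕ} (g : Code n) : (codeG g).ncard = pureNum g + 1 := by
  rw [codeG, Set.ncard_union_eq ?disj (Set.finite_singleton _) ((pureSet_finite g).image _),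
    Set.ncard_singleton, Set.ncard_image_of_injective _ (add_left_injective 1), add_comm]
  · rfl
  case disj =>
    rw [Set.disjoint_left]
    rintro x hx ⟨j, ⟨hj, -⟩, rfl⟩
    simp only [Set.mem_singleton_iff] at hx
    omega

lemma mem_codeG {n : ℕ} (g : Code n) (x : ℕ) :
    x ∈ codeG g ↔ (x = 0 ∨ ∃ j ∈ pureSet g, j + 1 = x) := by
  simp only [codeG, Set.mem_union, Set.mem_singleton_iff, Set.mem_image]

lemma pureSet_codeEquiv {n : ℕ} (g : Code n) (v : Fin (n + 1)) :
    pureSet (codeEquiv n (g, v)) =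
      {j ∈ pureSet g | j + 1 ≠ (v : ℕ)} ∪ (if (v : ℕ) ≠ 0 then {n} else ∅) := by
  ext j
  simp only [Set.mem_union, Set.mem_setOf_eq]
  constructor
  · rintro ⟨hj, hne, hnp⟩
    rcases lt_trichotomy j n with hjn | hjn | hjn
    · refine Or.inl ⟨⟨hjn, ?_, ?_⟩, ?_⟩
      · rwa [codeEquiv_mk g v j hjn] at hne
      · intro j'
        have := hnp (Fin.castSucc j')
        rwa [congrArg Fin.val (codeEquiv_castSucc g v j')] at this
      · have := hnp (Fin.last n)
        rw [congrArg Fin.val (codeEquiv_last g v)] at this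
        omega
    · subst hjn
      refine Or.inr ?_
      rw [codeEquiv_lastval g v] at hne
      rw [if_pos hne]
      rfl
    · omega
  · rintro (⟨⟨hjn, hne, hnp⟩, hnv⟩ | hj)
    · refine ⟨by omega, ?_, ?_⟩
      · rwa [codeEquiv_mk g v j hjn]
      · intro j'
        refine Fin.lastCases ?_ ?_ j'
        · rw [congrArg Fin.val (codeEquiv_last g v)]
          omega
        · intro j''
          rw [congrArg Fin.val (codeEquiv_castSucc g v j'')]
          exact hnp j''
    · by_cases hv : (v : ℕ) ≠ 0
      · rw [if_pos hv, Set.mem_singleton_iff] at hj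
        refine ⟨by omega, ?_, ?_⟩
        · have e : (⟨j, by omega⟩ : Fin (n + 1)) = Fin.last n := Fin.ext (by simpa using hj)
          rw [e, congrArg Fin.val (codeEquiv_last g v)]
          exact hv
        · intro j'
          have h1 : (codeEquiv n (g, v) j' : ℕ) ≤ (j' : ℕ) := by
            have := (codeEquiv n (g, v) j').isLt
            omega
          have h2 : (j' : ℕ) < n + 1 := j'.isLt
          omega
      · rw [if_neg hv] at hj
        exact absurd hj (Set.notMem_empty _)

open scoped Classical in
lemma pureNum_codeEquiv {n : ℕ} (g : Code n) (v : Fin (n + 1)) :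
    pureNum (codeEquiv n (g, v)) =
      if (v : ℕ) ∈ codeG g then pureNum g else pureNum g + 1 := by
  have hfin : (pureSet g).Finite := pureSet_finite g
  have hSfin : ({j ∈ pureSet g | j + 1 ≠ (v : ℕ)}).Finite := hfin.subset (fun x hx => hx.1)
  rw [pureNum, pureSet_codeEquiv, mem_codeG]
  by_cases hv : (v : ℕ) = 0
  · rw [if_pos (Or.inl hv)]
    have hS : {j ∈ pureSet g | j + 1 ≠ (v : ℕ)} = pureSet g := by
      ext j; simp only [Set.mem_setOf_eq, and_iff_left_iff_imp]
      intro _; omega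
    rw [if_neg (by omega), Set.union_empty, hS]
    rfl
  · rw [if_pos hv]
    have hdisj : Disjoint {j ∈ pureSet g | j + 1 ≠ (v : ℕ)} ({n} : Set ℕ) := by
      rw [Set.disjoint_right]
      rintro x hx ⟨⟨h, -⟩, -⟩
      simp only [Set.mem_singleton_iff] at hx
      omega
    rw [Set.ncard_union_eq hdisj hSfin (Set.finite_singleton _), Set.ncard_singleton]
    by_cases hex : ∃ j ∈ pureSet g, j + 1 = (v : ℕ)
    · rw [if_pos (Or.inr hex)]
      obtain ⟨j0, hj0, hj0v⟩ := hex
      have hS : {j ∈ pureSet g | j + 1 ≠ (v : ℕ)} = pureSet g \ {j0} := by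
        ext j
        simp only [Set.mem_setOf_eq, Set.mem_diff, Set.mem_singleton_iff]
        constructor
        · rintro ⟨h1, h2⟩; exact ⟨h1, by omega⟩
        · rintro ⟨h1, h2⟩; exact ⟨h1, by omega⟩
      rw [hS]
      have := Set.ncard_diff_singleton_add_one hj0 hfin
      unfold pureNum
      omega
    · rw [if_neg (by
        rintro (h | ⟨j, hj, hjv⟩)
        · exact hv h
        · exact hex ⟨j, hj, hjv⟩)]
      have hS : {j ∈ pureSet g | j + 1 ≠ (v : ℕ)} = pureSet g := by
        ext j; simp only [Set.mem_setOf_eq, and_iff_left_iff_imp]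
        intro h1 hc
        exact hex ⟨j, h1, hc⟩
      rw [hS]
      rfl

def finSubEquiv {n : ℕ} (G : Set ℕ) (hsub : G ⊆ Set.Iio (n + 1)) :
    {p : Fin (n + 1) // (p : ℕ) ∈ G} ≃ G where
  toFun x := ⟨(x.1 : ℕ), x.2⟩
  invFun y := ⟨⟨y.1, hsub y.2⟩, y.2⟩
  left_inv x := Subtype.ext (Fin.ext rfl)
  right_inv y := rfl

lemma count_mem {n : ℕ} (G : Set ℕ) (hsub : G ⊆ Set.Iio (n + 1)) :
    Nat.card {p : Fin (n + 1) // (p : ℕ) ∈ G} = G.ncard := by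
  rw [Nat.card_congr (finSubEquiv G hsub), Nat.card_coe_set_eq]

lemma count_notMem {n : ℕ} (G : Set ℕ) (hsub : G ⊆ Set.Iio (n + 1)) :
    Nat.card {p : Fin (n + 1) // ¬ (p : ℕ) ∈ G} = (n + 1) - G.ncard := by
  classical
  rw [Nat.card_eq_fintype_card, Fintype.card_subtype_compl, Fintype.card_fin,
    ← Nat.card_eq_fintype_card, count_mem G hsub]

open scoped Classical in
lemma count_fiber {n : ℕ} (s : ℕ) (G : Set ℕ)
    (hGsub : G ⊆ Set.Iio (n + 1)) (hGcard : G.ncard = s + 1) (D : ℕ) :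
    Nat.card {p : Fin (n + 1) // (if (p : ℕ) ∈ G then s else s + 1) = D} =
      if s = D then D + 1 else if s + 1 = D then n + 1 - D else 0 := by
  by_cases h1 : s = D
  · rw [if_pos h1]
    have he : ∀ p : Fin (n + 1), ((if (p : ℕ) ∈ G then s else s + 1) = D) ↔ (p : ℕ) ∈ G := by
      intro p; split_ifs with h
      · simp [h1, h]
      · constructor
        · intro hc; omega
        · intro hc; exact absurd hc h
    rw [Nat.card_congr (Equiv.subtypeEquivRight he), count_mem G hGsub, hGcard, h1]
  · rw [if_neg h1]
    by_cases h2 : s + 1 = D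
    · rw [if_pos h2]
      have he : ∀ p : Fin (n + 1), ((if (p : ℕ) ∈ G then s else s + 1) = D) ↔ ¬ (p : ℕ) ∈ G := by
        intro p; split_ifs with h
        · constructor
          · intro hc; omega
          · intro hc; exact absurd h hc
        · simp [h2, h]
      rw [Nat.card_congr (Equiv.subtypeEquivRight he), count_notMem G hGsub, hGcard]
      omega
    · rw [if_neg h2]
      have : IsEmpty {p : Fin (n + 1) // (if (p : ℕ) ∈ G then s else s + 1) = D} := by
        constructor
        rintro ⟨p, hp⟩
        split_ifs at hp <;> omega
      exact Nat.card_of_isEmpty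

open scoped Classical in
lemma count_split {n : ℕ} {A : Type*} [Fintype A] (t : A × Fin (n + 1) → ℕ) (D : ℕ) :
    Nat.card {x : A × Fin (n + 1) // t x = D} =
      ∑ a : A, Nat.card {p : Fin (n + 1) // t (a, p) = D} := by
  rw [Nat.card_eq_fintype_card,
    Fintype.card_congr (Equiv.subtypeProdEquivSigmaSubtype (fun a (p : Fin (n + 1)) => t (a, p) = D)),
    Fintype.card_sigma]
  exact Finset.sum_congr rfl (fun a _ => (Nat.card_eq_fintype_card).symm)

open scoped Classical in
lemma count_rec {n : ℕ} {A B : Type*} [Fintype A] (e : A × Fin (n + 1) ≃ B)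
    (s : A → ℕ) (t : B → ℕ) (G : A → Set ℕ)
    (hGsub : ∀ a, G a ⊆ Set.Iio (n + 1)) (hGcard : ∀ a, (G a).ncard = s a + 1)
    (ht : ∀ a p, t (e (a, p)) = if (p : ℕ) ∈ G a then s a else s a + 1) (D : ℕ) :
    Nat.card {b : B // t b = D} =
      (D + 1) * Nat.card {a : A // s a = D} +
        (n + 1 - D) * Nat.card {a : A // s a + 1 = D} := by
  have h0 : Nat.card {b : B // t b = D} = Nat.card {x : A × Fin (n + 1) // t (e x) = D} :=
    (Nat.card_congr (e.subtypeEquiv (fun x => Iff.rfl))).symm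
  rw [h0, count_split (fun x => t (e x)) D]
  have h1 : ∀ a : A, Nat.card {p : Fin (n + 1) // t (e (a, p)) = D} =
      (D + 1) * (if s a = D then 1 else 0) + (n + 1 - D) * (if s a + 1 = D then 1 else 0) := by
    intro a
    have he : ∀ p : Fin (n + 1), (t (e (a, p)) = D) ↔ ((if (p : ℕ) ∈ G a then s a else s a + 1) = D) := by
      intro p; rw [ht]
    rw [Nat.card_congr (Equiv.subtypeEquivRight he), count_fiber (s a) (G a) (hGsub a) (hGcard a) D]
    by_cases hsa : s a = D
    · rw [if_pos hsa, if_pos hsa, if_neg (by omega)]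
      ring
    · rw [if_neg hsa, if_neg hsa]
      by_cases hsb : s a + 1 = D
      · rw [if_pos hsb, if_pos hsb]
        ring
      · rw [if_neg hsb, if_neg hsb]
        ring
  rw [Finset.sum_congr rfl (fun a _ => h1 a), Finset.sum_add_distrib,
    ← Finset.mul_sum, ← Finset.mul_sum, Finset.sum_boole, Finset.sum_boole,
    Nat.cast_id, Nat.cast_id, Nat.card_eq_fintype_card, Nat.card_eq_fintype_card,
    Fintype.card_subtype, Fintype.card_subtype]

lemma count_const_zero {α : Type*} [Fintype α] (s : α → ℕ) (hs : ∀ a, s a = 0) (d : ℕ) :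
    Nat.card {a : α // s a = d} = if d = 0 then Nat.card α else 0 := by
  by_cases hd : d = 0
  · rw [if_pos hd]
    exact Nat.card_congr (Equiv.subtypeUnivEquiv (fun a => by rw [hs, hd]))
  · rw [if_neg hd]
    have : IsEmpty {a : α // s a = d} := ⟨fun x => hd (by rw [← x.2, hs])⟩
    exact Nat.card_of_isEmpty

lemma nDes_zero {π : Equiv.Perm (Fin 0)} : nDes π = 0 := by
  have : dset π = ∅ := by
    ext i; simp only [Set.mem_empty_iff_false, iff_false]
    rintro ⟨h, -⟩; omega
  rw [nDes, this, Set.ncard_empty]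

lemma pureNum_zero {g : Code 0} : pureNum g = 0 := by
  have : pureSet g = ∅ := by
    ext j; simp only [Set.mem_empty_iff_false, iff_false]
    rintro ⟨h, -⟩; omega
  rw [pureNum, this, Set.ncard_empty]

lemma perm_code_count : ∀ n d : ℕ,
    Nat.card {π : Equiv.Perm (Fin n) // nDes π = d} = Nat.card {g : Code n // pureNum g = d} := by
  intro n
  induction n with
  | zero =>
    intro d
    rw [count_const_zero _ (fun _ => nDes_zero) d, count_const_zero _ (fun _ => pureNum_zero) d]
    by_cases hd : d = 0
    · rw [if_pos hd, if_pos hd]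
      rw [Nat.card_eq_fintype_card, Nat.card_eq_fintype_card, Fintype.card_perm, Fintype.card_fin]
      rfl
    · rw [if_neg hd, if_neg hd]
  | succ n ih =>
    intro d
    have hperm := count_rec (permEquiv n) nDes nDes permG permG_sub permG_card
      (fun σ p => by rw [permEquiv_apply, nDes_insPerm]) d
    have hcode := count_rec (codeEquiv n) pureNum pureNum codeG codeG_sub codeG_card
      (fun g v => pureNum_codeEquiv g v) d
    rw [hperm, hcode, ih d]
    congr 1
    congr 1
    cases d with
    | zero =>
      have h1 : IsEmpty {σ : Equiv.Perm (Fin n) // nDes σ + 1 = 0} :=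
        ⟨fun x => Nat.succ_ne_zero _ x.2⟩
      have h2 : IsEmpty {g : Code n // pureNum g + 1 = 0} :=
        ⟨fun x => Nat.succ_ne_zero _ x.2⟩
      rw [Nat.card_of_isEmpty, Nat.card_of_isEmpty]
    | succ d' =>
      have e1 : ∀ σ : Equiv.Perm (Fin n), (nDes σ + 1 = d' + 1) ↔ (nDes σ = d') := by
        intro σ; omega
      have e2 : ∀ g : Code n, (pureNum g + 1 = d' + 1) ↔ (pureNum g = d') := by
        intro g; omega
      rw [Nat.card_congr (Equiv.subtypeEquivRight e1), Nat.card_congr (Equiv.subtypeEquivRight e2)]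
      exact ih d'

lemma nDes_rev {n : ℕ} (π : Equiv.Perm (Fin n)) :
    nDes (π * Fin.revPerm) = n - 1 - nDes π := by
  rw [nDes, dset_mul_rev, Set.ncard_image_of_injOn (by
    rintro a ⟨ha, -⟩ b ⟨hb, -⟩ hab
    simp only [Set.mem_Iio] at ha hb
    dsimp only at hab
    omega),
    Set.ncard_diff (dset_subset π) (dset_finite π), ncard_Iio_nat]
  rfl

lemma count_rev {n k : ℕ} (hk : 1 ≤ k) (hkn : k ≤ n) :
    Nat.card {π : Equiv.Perm (Fin n) // nDes π = n - k} =
      Nat.card {π : Equiv.Perm (Fin n) // nDes π = k - 1} := by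
  symm
  apply Nat.card_congr
  refine (Equiv.mulRight Fin.revPerm).subtypeEquiv (fun π => ?_)
  rw [Equiv.coe_mulRight, nDes_rev]
  have := nDes_le π
  omega

/-! ### Linked partitions from codes -/

def par {n : ℕ} (g : Code n) (c : ℕ) : ℕ :=
  if h : 1 ≤ c ∧ c ≤ n then (g ⟨c - 1, by omega⟩ : ℕ) else 0

lemma par_val {n : ℕ} (g : Code n) {c : ℕ} (h1 : 1 ≤ c) (h2 : c ≤ n) :
    par g c = (g ⟨c - 1, by omega⟩ : ℕ) := by
  unfold par; rw [dif_pos ⟨h1, h2⟩]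

lemma par_lt {n : ℕ} (g : Code n) {c : ℕ} (h1 : 1 ≤ c) (h2 : c ≤ n) : par g c < c := by
  rw [par_val g h1 h2]
  have h3 := (g ⟨c - 1, by omega⟩).isLt
  have h4 : ((⟨c - 1, by omega⟩ : Fin n) : ℕ) = c - 1 := rfl
  omega

lemma par_eq_zero_of_not {n : ℕ} (g : Code n) {c : ℕ} (h : ¬ (1 ≤ c ∧ c ≤ n)) :
    par g c = 0 := by
  unfold par; rw [dif_neg h]

lemma par_fin {n : ℕ} (g : Code n) (j : Fin n) : par g ((j : ℕ) + 1) = (g j : ℕ) := by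
  unfold par
  rw [dif_pos ⟨by omega, by have := j.isLt; omega⟩]
  have e : (⟨(j : ℕ) + 1 - 1, by omega⟩ : Fin n) = j := Fin.ext rfl
  rw [e]

def children {n : ℕ} (g : Code n) (i : ℕ) : Finset ℕ :=
  (Finset.Icc 1 n).filter (fun c => par g c = i)

lemma mem_children {n : ℕ} {g : Code n} {i c : ℕ} :
    c ∈ children g i ↔ 1 ≤ c ∧ c ≤ n ∧ par g c = i := by
  simp only [children, Finset.mem_filter, Finset.mem_Icc, and_assoc]

def blockOf {n : ℕ} (g : Code n) (i : ℕ) : Finset ℕ := insert i (children g i)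

lemma children_gt {n : ℕ} (g : Code n) {i c : ℕ} (h : c ∈ children g i) : i < c := by
  rw [mem_children] at h
  have := par_lt g h.1 h.2.1
  omega

lemma mem_blockOf_self {n : ℕ} (g : Code n) (i : ℕ) : i ∈ blockOf g i :=
  Finset.mem_insert_self _ _

lemma blockOf_min {n : ℕ} (g : Code n) (i : ℕ) : ∀ y ∈ blockOf g i, i ≤ y := by
  intro y hy
  rcases Finset.mem_insert.mp hy with rfl | hy
  · exact le_refl _
  · exact le_of_lt (children_gt g hy)

lemma blockOf_inj {n : ℕ} (g : Code n) : Function.Injective (blockOf g) := by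
  intro i i' h
  have h1 : i' ≤ i := blockOf_min g i' i (h ▸ mem_blockOf_self g i)
  have h2 : i ≤ i' := blockOf_min g i i' (h.symm ▸ mem_blockOf_self g i')
  omega

lemma card_blockOf {n : ℕ} (g : Code n) (i : ℕ) :
    (blockOf g i).card = (children g i).card + 1 := by
  rw [blockOf, Finset.card_insert_of_notMem]
  intro h
  exact lt_irrefl i (children_gt g h)

def minset {n : ℕ} (g : Code n) : Finset ℕ :=
  (Finset.Icc 1 n).filter (fun i => par g i = 0 ∨ (children g i).Nonempty)

def LPofCode {n : ℕ} (g : Code n) : Finset (Finset ℕ) := (minset g).image (blockOf g)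

lemma children_eq_empty_iff {n : ℕ} (g : Code n) (j : Fin n) :
    children g ((j : ℕ) + 1) = ∅ ↔ ∀ j' : Fin n, (g j' : ℕ) ≠ (j : ℕ) + 1 := by
  constructor
  · intro h j' hc
    have hm : (j' : ℕ) + 1 ∈ children g ((j : ℕ) + 1) := by
      rw [mem_children]
      exact ⟨by omega, by have := j'.isLt; omega, by rw [par_fin]; exact hc⟩
    rw [h] at hm
    exact absurd hm (Finset.notMem_empty _)
  · intro h
    rw [Finset.eq_empty_iff_forall_notMem]
    intro c hc
    rw [mem_children] at hc
    obtain ⟨hc1, hc2, hc3⟩ := hc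
    rw [par_val g hc1 hc2] at hc3
    exact h ⟨c - 1, by omega⟩ hc3

lemma minset_card {n : ℕ} (g : Code n) : (minset g).card + pureNum g = n := by
  classical
  have hpure : pureNum g =
      (((Finset.Icc 1 n).filter
        (fun i => ¬ (par g i = 0 ∨ (children g i).Nonempty))).image (fun c => c - 1)).card := by
    rw [pureNum, ← Set.ncard_coe_finset]
    congr 1
    ext j
    simp only [Finset.coe_image, Set.mem_image, Finset.mem_coe, Finset.mem_filter,
      Finset.mem_Icc, pureSet, Set.mem_setOf_eq]
    constructor
    · rintro ⟨hj, hne, hnp⟩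
      refine ⟨j + 1, ⟨⟨by omega, by omega⟩, ?_⟩, by omega⟩
      rw [not_or]
      constructor
      · have e : par g (((⟨j, hj⟩ : Fin n) : ℕ) + 1) = (g ⟨j, hj⟩ : ℕ) := par_fin g ⟨j, hj⟩
        simp only at e
        rw [e]
        exact hne
      · rw [Finset.nonempty_iff_ne_empty, not_not]
        exact (children_eq_empty_iff g ⟨j, hj⟩).mpr hnp
    · rintro ⟨c, ⟨⟨hc1, hc2⟩, hcp⟩, rfl⟩
      rw [not_or] at hcp
      obtain ⟨hp0, hpn⟩ := hcp
      have hj : c - 1 < n := by omega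
      have e : ((⟨c - 1, hj⟩ : Fin n) : ℕ) + 1 = c := by simp only; omega
      refine ⟨hj, ?_, ?_⟩
      · intro hcontra
        apply hp0
        rw [par_val g hc1 hc2]
        exact hcontra
      · have h5 : children g c = ∅ := by rwa [Finset.nonempty_iff_ne_empty, not_not] at hpn
        have h6 := (children_eq_empty_iff g ⟨c - 1, hj⟩).mp (by rw [e]; exact h5)
        exact h6
  rw [hpure, Finset.card_image_of_injOn (by
    intro a ha b hb hab
    rw [Finset.mem_coe, Finset.mem_filter, Finset.mem_Icc] at ha hb
    have ha1 := ha.1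
    have hb1 := hb.1
    dsimp only at hab
    omega)]
  have := Finset.card_filter_add_card_filter_not
    (s := Finset.Icc 1 n) (p := fun i => par g i = 0 ∨ (children g i).Nonempty)
  rw [minset]
  rw [Nat.card_Icc] at this
  omega

lemma pureNum_eq {n : ℕ} (g : Code n) : pureNum g = n - (minset g).card := by
  have := minset_card g; omega

lemma card_LPofCode {n : ℕ} (g : Code n) : (LPofCode g).card = (minset g).card :=
  Finset.card_image_of_injective _ (blockOf_inj g)

lemma LPofCode_isLP {n : ℕ} (g : Code n) : IsLinkedPartition n (LPofCode g) := by
  refine ⟨?_, ?_, ?_⟩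
  · intro B hB
    obtain ⟨i, hi, rfl⟩ := Finset.mem_image.mp hB
    rw [minset, Finset.mem_filter] at hi
    refine ⟨⟨i, mem_blockOf_self g i⟩, ?_⟩
    intro y hy
    rcases Finset.mem_insert.mp hy with rfl | hy
    · exact hi.1
    · rw [mem_children] at hy
      exact Finset.mem_Icc.mpr ⟨hy.1, hy.2.1⟩
  · intro x hx
    by_cases hxm : x ∈ minset g
    · exact ⟨blockOf g x, Finset.mem_image_of_mem _ hxm, mem_blockOf_self g x⟩
    · rw [Finset.mem_Icc] at hx
      have hxm' := hxm
      rw [minset, Finset.mem_filter] at hxm'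
      have hpar : ¬ (par g x = 0 ∨ (children g x).Nonempty) := by
        intro hc
        exact hxm' ⟨Finset.mem_Icc.mpr hx, hc⟩
      rw [not_or] at hpar
      have hp0 : par g x ≠ 0 := hpar.1
      have hilt : par g x < x := par_lt g hx.1 hx.2
      have hxc : x ∈ children g (par g x) := mem_children.mpr ⟨hx.1, hx.2, rfl⟩
      have him : par g x ∈ minset g := by
        rw [minset, Finset.mem_filter]
        exact ⟨Finset.mem_Icc.mpr ⟨by omega, by omega⟩, Or.inr ⟨x, hxc⟩⟩
      exact ⟨blockOf g (par g x), Finset.mem_image_of_mem _ him,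
        Finset.mem_insert_of_mem hxc⟩
  · intro B hB C hC hne x hx
    obtain ⟨i, hi, rfl⟩ := Finset.mem_image.mp hB
    obtain ⟨i', hi', rfl⟩ := Finset.mem_image.mp hC
    have hii' : i ≠ i' := fun h => hne (by rw [h])
    rw [Finset.mem_inter] at hx
    obtain ⟨hx1, hx2⟩ := hx
    rw [minset, Finset.mem_filter, Finset.mem_Icc] at hi hi'
    rcases Finset.mem_insert.mp hx1 with rfl | hc1
    · rcases Finset.mem_insert.mp hx2 with heq | hc2
      · exact absurd heq hii'
      · -- x = i and par g x = i'
        left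
        refine ⟨blockOf_min g x, ?_, ⟨i', mem_blockOf_self g i', children_gt g hc2⟩⟩
        have hch : (children g x).Nonempty := by
          rcases hi.2 with hp | hp
          · exfalso
            rw [mem_children] at hc2
            have : 1 ≤ i' := hi'.1.1
            omega
          · exact hp
        rw [card_blockOf]
        have := Finset.Nonempty.card_pos hch
        omega
    · rcases Finset.mem_insert.mp hx2 with rfl | hc2
      · -- x = i' and par g x = i
        right
        refine ⟨blockOf_min g x, ?_, ⟨i, mem_blockOf_self g i, children_gt g hc1⟩⟩
        have hch : (children g x).Nonempty := by
          rcases hi'.2 with hp | hp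
          · exfalso
            rw [mem_children] at hc1
            have : 1 ≤ i := hi.1.1
            omega
          · exact hp
        rw [card_blockOf]
        have := Finset.Nonempty.card_pos hch
        omega
      · exfalso
        rw [mem_children] at hc1 hc2
        exact hii' (hc1.2.2.symm.trans hc2.2.2)

lemma LPofCode_injective {n : ℕ} : Function.Injective (LPofCode (n := n)) := by
  have key : ∀ a b : Code n, LPofCode a = LPofCode b →
      ∀ c, 1 ≤ c → c ≤ n → par a c ≠ 0 → par b c = par a c := by
    intro a b hab c h1 h2 hpar
    have hi1 : 1 ≤ par a c := Nat.one_le_iff_ne_zero.mpr hpar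
    have hilt : par a c < c := par_lt a h1 h2
    have hcmem : c ∈ children a (par a c) := mem_children.mpr ⟨h1, h2, rfl⟩
    have himem : par a c ∈ minset a := by
      rw [minset, Finset.mem_filter]
      exact ⟨Finset.mem_Icc.mpr ⟨hi1, by omega⟩, Or.inr ⟨c, hcmem⟩⟩
    have hBmem : blockOf a (par a c) ∈ LPofCode b := by
      rw [← hab]
      exact Finset.mem_image_of_mem _ himem
    obtain ⟨i'', hi'', hBeq⟩ := Finset.mem_image.mp hBmem
    have hii : i'' = par a c := by
      have hle1 : i'' ≤ par a c := blockOf_min b i'' _ (by rw [hBeq]; exact mem_blockOf_self a _)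
      have hle2 : par a c ≤ i'' := blockOf_min a (par a c) i'' (by rw [← hBeq]; exact mem_blockOf_self b _)
      omega
    subst hii
    have hcB : c ∈ blockOf b (par a c) := by rw [hBeq]; exact Finset.mem_insert_of_mem hcmem
    rcases Finset.mem_insert.mp hcB with heq | hcc
    · omega
    · exact (mem_children.mp hcc).2.2
  intro g g' h
  have hpar_eq : ∀ c, par g c = par g' c := by
    intro c
    by_cases hc : 1 ≤ c ∧ c ≤ n
    · by_cases h0 : par g c = 0
      · by_cases h0' : par g' c = 0
        · rw [h0, h0']
        · exact key g' g h.symm c hc.1 hc.2 h0'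
      · exact (key g g' h c hc.1 hc.2 h0).symm
    · rw [par_eq_zero_of_not g hc, par_eq_zero_of_not g' hc]
  funext j
  apply Fin.ext
  have := hpar_eq ((j : ℕ) + 1)
  rwa [par_fin, par_fin] at this

/-! ### Codes from linked partitions -/

lemma min'_congr {s t : Finset ℕ} (h : s = t) (hs : s.Nonempty) (ht : t.Nonempty) :
    s.min' hs = t.min' ht := by subst h; rfl

lemma block_unique {n : ℕ} {P : Finset (Finset ℕ)} (hP : IsLinkedPartition n P)
    {B B' : Finset ℕ} (hB : B ∈ P) (hB' : B' ∈ P) {c : ℕ}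
    (hcB : c ∈ B) (hcB' : c ∈ B')
    (hyB : ∃ y ∈ B, y < c) (hyB' : ∃ y ∈ B', y < c) : B = B' := by
  by_contra hne
  rcases hP.2.2 B hB B' hB' hne c (Finset.mem_inter.mpr ⟨hcB, hcB'⟩) with
    ⟨hmin, -, -⟩ | ⟨hmin, -, -⟩
  · obtain ⟨y, hy, hyc⟩ := hyB
    exact absurd (hmin y hy) (by omega)
  · obtain ⟨y, hy, hyc⟩ := hyB'
    exact absurd (hmin y hy) (by omega)

lemma min_block_unique {n : ℕ} {P : Finset (Finset ℕ)} (hP : IsLinkedPartition n P)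
    {B B' : Finset ℕ} (hB : B ∈ P) (hB' : B' ∈ P) {m : ℕ}
    (hmB : m ∈ B) (hmB' : m ∈ B')
    (hminB : ∀ y ∈ B, m ≤ y) (hminB' : ∀ y ∈ B', m ≤ y) : B = B' := by
  by_contra hne
  rcases hP.2.2 B hB B' hB' hne m (Finset.mem_inter.mpr ⟨hmB, hmB'⟩) with
    ⟨-, -, y, hy, hyc⟩ | ⟨-, -, y, hy, hyc⟩
  · exact absurd (hminB' y hy) (by omega)
  · exact absurd (hminB y hy) (by omega)

noncomputable def codeOfLP (n : ℕ) (P : Finset (Finset ℕ)) : Code n := fun j =>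
  if h : ∃ B ∈ P, ((j : ℕ) + 1 ∈ B ∧ ∃ y ∈ B, y < (j : ℕ) + 1) then
    ⟨h.choose.min' ⟨(j : ℕ) + 1, h.choose_spec.2.1⟩, by
      obtain ⟨hBP, hc, y, hy, hyc⟩ := h.choose_spec
      exact lt_of_le_of_lt (Finset.min'_le _ _ hy) hyc⟩
  else ⟨0, Nat.succ_pos _⟩

lemma codeOfLP_spec1 {n : ℕ} {P : Finset (Finset ℕ)} (hP : IsLinkedPartition n P) (j : Fin n)
    {B : Finset ℕ} (hB : B ∈ P) (hc : (j : ℕ) + 1 ∈ B) {y : ℕ} (hy : y ∈ B)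
    (hyc : y < (j : ℕ) + 1) :
    ((codeOfLP n P j : Fin ((j : ℕ) + 1)) : ℕ) = B.min' ⟨(j : ℕ) + 1, hc⟩ := by
  have hex : ∃ B ∈ P, ((j : ℕ) + 1 ∈ B ∧ ∃ y ∈ B, y < (j : ℕ) + 1) := ⟨B, hB, hc, y, hy, hyc⟩
  unfold codeOfLP
  rw [dif_pos hex]
  obtain ⟨h1, h2, h3⟩ := hex.choose_spec
  have hBB : hex.choose = B := block_unique hP h1 hB h2 hc h3 ⟨y, hy, hyc⟩
  exact min'_congr hBB ⟨_, hex.choose_spec.2.1⟩ ⟨_, hc⟩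

lemma codeOfLP_spec0 {n : ℕ} {P : Finset (Finset ℕ)} (j : Fin n)
    (h : ∀ B ∈ P, (j : ℕ) + 1 ∈ B → ∀ y ∈ B, (j : ℕ) + 1 ≤ y) :
    ((codeOfLP n P j : Fin ((j : ℕ) + 1)) : ℕ) = 0 := by
  unfold codeOfLP
  rw [dif_neg]
  rintro ⟨B, hB, hc, y, hy, hyc⟩
  exact absurd (h B hB hc y hy) (by omega)

lemma codeOfLP_spec2 {n : ℕ} {P : Finset (Finset ℕ)} (j : Fin n)
    (h : ((codeOfLP n P j : Fin ((j : ℕ) + 1)) : ℕ) ≠ 0) :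
    ∃ B ∈ P, (j : ℕ) + 1 ∈ B ∧ (∃ y ∈ B, y < (j : ℕ) + 1) ∧
      ((codeOfLP n P j : Fin ((j : ℕ) + 1)) : ℕ) ∈ B ∧
      ∀ y ∈ B, ((codeOfLP n P j : Fin ((j : ℕ) + 1)) : ℕ) ≤ y := by
  by_cases hex : ∃ B ∈ P, ((j : ℕ) + 1 ∈ B ∧ ∃ y ∈ B, y < (j : ℕ) + 1)
  · obtain ⟨hm1, hm2, hm3⟩ := hex.choose_spec
    refine ⟨hex.choose, hm1, hm2, hm3, ?_, ?_⟩
    · have he : ((codeOfLP n P j : Fin ((j : ℕ) + 1)) : ℕ) =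
          hex.choose.min' ⟨(j : ℕ) + 1, hm2⟩ := by
        unfold codeOfLP
        rw [dif_pos hex]
      rw [he]
      exact Finset.min'_mem _ _
    · intro y hy
      have he : ((codeOfLP n P j : Fin ((j : ℕ) + 1)) : ℕ) =
          hex.choose.min' ⟨(j : ℕ) + 1, hm2⟩ := by
        unfold codeOfLP
        rw [dif_pos hex]
      rw [he]
      exact Finset.min'_le _ _ hy
  · exfalso
    apply h
    unfold codeOfLP
    rw [dif_neg hex]

/-- Element-level version of spec1. -/
lemma cspec1 {n : ℕ} {P : Finset (Finset ℕ)} (hP : IsLinkedPartition n P)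
    {B : Finset ℕ} {c : ℕ} (hc1 : 1 ≤ c) (hc2 : c ≤ n)
    (hB : B ∈ P) (hcB : c ∈ B) {y : ℕ} (hy : y ∈ B) (hyc : y < c) :
    par (codeOfLP n P) c = B.min' ⟨c, hcB⟩ := by
  have hlt : c - 1 < n := by omega
  have e : ((⟨c - 1, hlt⟩ : Fin n) : ℕ) + 1 = c := by simp only; omega
  have h1 : par (codeOfLP n P) c = ((codeOfLP n P ⟨c - 1, hlt⟩ : Fin ((c - 1) + 1)) : ℕ) :=
    par_val (codeOfLP n P) hc1 hc2
  have hc' : ((⟨c - 1, hlt⟩ : Fin n) : ℕ) + 1 ∈ B := by rw [e]; exact hcB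
  have hyc' : y < ((⟨c - 1, hlt⟩ : Fin n) : ℕ) + 1 := by rw [e]; exact hyc
  have h2 := codeOfLP_spec1 hP ⟨c - 1, hlt⟩ hB hc' hy hyc'
  exact h1.trans h2

/-- Element-level version of spec2. -/
lemma cspec2 {n : ℕ} {P : Finset (Finset ℕ)} {c : ℕ} (hc1 : 1 ≤ c) (hc2 : c ≤ n)
    (h : par (codeOfLP n P) c ≠ 0) :
    ∃ B ∈ P, c ∈ B ∧ (∃ y ∈ B, y < c) ∧
      par (codeOfLP n P) c ∈ B ∧ ∀ y ∈ B, par (codeOfLP n P) c ≤ y := by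
  have hlt : c - 1 < n := by omega
  have e : ((⟨c - 1, hlt⟩ : Fin n) : ℕ) + 1 = c := by simp only; omega
  have h1 : par (codeOfLP n P) c = ((codeOfLP n P ⟨c - 1, hlt⟩ : Fin ((c - 1) + 1)) : ℕ) :=
    par_val (codeOfLP n P) hc1 hc2
  rw [h1] at h ⊢
  obtain ⟨B, hB, hcB, hyB, hmem, hmin⟩ := codeOfLP_spec2 ⟨c - 1, hlt⟩ h
  rw [e] at hcB hyB
  exact ⟨B, hB, hcB, hyB, hmem, hmin⟩

lemma claimA {n : ℕ} {P : Finset (Finset ℕ)} (hP : IsLinkedPartition n P)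
    {B : Finset ℕ} (hB : B ∈ P) (hne : B.Nonempty) :
    (B.min' hne) ∈ minset (codeOfLP n P) ∧ blockOf (codeOfLP n P) (B.min' hne) = B := by
  have hsub : B ⊆ Finset.Icc 1 n := (hP.1 B hB).2
  have hmB : B.min' hne ∈ B := Finset.min'_mem _ _
  have hmIcc := Finset.mem_Icc.mp (hsub hmB)
  obtain ⟨hm1, hm2⟩ := hmIcc
  have hparc : ∀ c ∈ B, c ≠ B.min' hne → par (codeOfLP n P) c = B.min' hne := by
    intro c hcB hcm
    have hc := Finset.mem_Icc.mp (hsub hcB)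
    have hmc : B.min' hne < c := lt_of_le_of_ne (Finset.min'_le _ _ hcB) (Ne.symm hcm)
    have := cspec1 hP hc.1 hc.2 hB hcB hmB hmc
    rw [this]
  have h1 : B ⊆ blockOf (codeOfLP n P) (B.min' hne) := by
    intro c hcB
    by_cases hcm : c = B.min' hne
    · rw [hcm]; exact mem_blockOf_self _ _
    · apply Finset.mem_insert_of_mem
      have hc := Finset.mem_Icc.mp (hsub hcB)
      exact mem_children.mpr ⟨hc.1, hc.2, hparc c hcB hcm⟩
  have h2 : blockOf (codeOfLP n P) (B.min' hne) ⊆ B := by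
    intro c hc
    rcases Finset.mem_insert.mp hc with rfl | hc
    · exact hmB
    · rw [mem_children] at hc
      obtain ⟨hc1, hc2, hc3⟩ := hc
      have hpar0 : par (codeOfLP n P) c ≠ 0 := by rw [hc3]; omega
      obtain ⟨B', hB', hcB', hy', hvmem, hvmin⟩ := cspec2 hc1 hc2 hpar0
      rw [hc3] at hvmem hvmin
      have hBB : B' = B := min_block_unique hP hB' hB hvmem hmB hvmin
        (fun y hy => Finset.min'_le _ _ hy)
      exact hBB ▸ hcB'
  have hBeq : blockOf (codeOfLP n P) (B.min' hne) = B := Finset.Subset.antisymm h2 h1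
  refine ⟨?_, hBeq⟩
  rw [minset, Finset.mem_filter]
  refine ⟨Finset.mem_Icc.mpr ⟨hm1, hm2⟩, ?_⟩
  by_cases hch : (children (codeOfLP n P) (B.min' hne)).Nonempty
  · exact Or.inr hch
  · left
    by_contra hpar0
    obtain ⟨B'', hB'', hmB'', ⟨y, hyB'', hym⟩, -, -⟩ := cspec2 hm1 hm2 hpar0
    have hBne : B ≠ B'' := by
      rintro rfl
      exact absurd (Finset.min'_le _ _ hyB'') (by omega)
    rcases hP.2.2 B hB B'' hB'' hBne (B.min' hne)
        (Finset.mem_inter.mpr ⟨hmB, hmB''⟩) with ⟨-, hcard, -⟩ | ⟨hmin'', -, -⟩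
    · obtain ⟨c, hcB, hcm⟩ := Finset.exists_mem_ne hcard (B.min' hne)
      have hc := Finset.mem_Icc.mp (hsub hcB)
      have : c ∈ children (codeOfLP n P) (B.min' hne) :=
        mem_children.mpr ⟨hc.1, hc.2, hparc c hcB hcm⟩
      exact hch ⟨c, this⟩
    · exact absurd (hmin'' y hyB'') (by omega)

lemma blockOf_mem {n : ℕ} {P : Finset (Finset ℕ)} (hP : IsLinkedPartition n P)
    {i : ℕ} (hi : i ∈ minset (codeOfLP n P)) : blockOf (codeOfLP n P) i ∈ P := by
  rw [minset, Finset.mem_filter, Finset.mem_Icc] at hi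
  obtain ⟨⟨hi1, hi2⟩, hcase⟩ := hi
  by_cases hch : (children (codeOfLP n P) i).Nonempty
  · obtain ⟨c, hc⟩ := hch
    rw [mem_children] at hc
    obtain ⟨hc1, hc2, hc3⟩ := hc
    have hpar0 : par (codeOfLP n P) c ≠ 0 := by rw [hc3]; omega
    obtain ⟨B, hB, hcB, hy, hvmem, hvmin⟩ := cspec2 hc1 hc2 hpar0
    rw [hc3] at hvmem hvmin
    have hne : B.Nonempty := ⟨c, hcB⟩
    obtain ⟨hms, hBeq⟩ := claimA hP hB hne
    have hmi : B.min' hne = i :=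
      le_antisymm (Finset.min'_le _ _ hvmem) (Finset.le_min' _ _ _ hvmin)
    rw [hmi] at hBeq
    rw [hBeq]
    exact hB
  · have hpar0 : par (codeOfLP n P) i = 0 := hcase.resolve_right hch
    obtain ⟨B, hB, hiB⟩ := hP.2.1 i (Finset.mem_Icc.mpr ⟨hi1, hi2⟩)
    have hne : B.Nonempty := ⟨i, hiB⟩
    have hsub : B ⊆ Finset.Icc 1 n := (hP.1 B hB).2
    have hm : ∀ y ∈ B, i ≤ y := by
      intro y hy
      by_contra hlt
      push_neg at hlt
      have hpp := cspec1 hP hi1 hi2 hB hiB hy hlt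
      have hminB := Finset.min'_mem B ⟨i, hiB⟩
      have h1le := (Finset.mem_Icc.mp (hsub hminB)).1
      have : B.min' ⟨i, hiB⟩ = B.min' ⟨i, hiB⟩ := rfl
      rw [hpar0] at hpp
      omega
    have hBsingle : B = {i} := by
      apply Finset.eq_singleton_iff_unique_mem.mpr
      refine ⟨hiB, ?_⟩
      intro c hcB
      by_contra hci
      have hic : i < c := lt_of_le_of_ne (hm c hcB) (Ne.symm hci)
      have hc := Finset.mem_Icc.mp (hsub hcB)
      have hpp := cspec1 hP hc.1 hc.2 hB hcB hiB hic
      have hmin_i : B.min' ⟨c, hcB⟩ = i :=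
        le_antisymm (Finset.min'_le _ _ hiB) (Finset.le_min' _ _ _ hm)
      have : c ∈ children (codeOfLP n P) i :=
        mem_children.mpr ⟨hc.1, hc.2, by rw [hpp, hmin_i]⟩
      exact hch ⟨c, this⟩
    have hbo : blockOf (codeOfLP n P) i = {i} := by
      rw [blockOf, Finset.not_nonempty_iff_eq_empty.mp hch]
      rfl
    rw [hbo, ← hBsingle]
    exact hB

lemma LPofCode_codeOfLP {n : ℕ} {P : Finset (Finset ℕ)} (hP : IsLinkedPartition n P) :
    LPofCode (codeOfLP n P) = P := by
  ext B
  constructor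
  · intro hB
    obtain ⟨i, hi, rfl⟩ := Finset.mem_image.mp hB
    exact blockOf_mem hP hi
  · intro hB
    have hne := (hP.1 B hB).1
    obtain ⟨h1, h2⟩ := claimA hP hB hne
    rw [← h2]
    exact Finset.mem_image_of_mem _ h1

lemma part_code_card {n k : ℕ} (hk : 1 ≤ k) (hkn : k ≤ n) :
    Nat.card {P : Finset (Finset ℕ) // IsLinkedPartition n P ∧ P.card = k} =
      Nat.card {g : Code n // pureNum g = n - k} := by
  symm
  apply Nat.card_congr
  apply Equiv.ofBijective (f := fun x : {g : Code n // pureNum g = n - k} =>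
    (⟨LPofCode x.1, LPofCode_isLP x.1, by
      rw [card_LPofCode]
      have h1 := minset_card x.1
      have h2 := x.2
      omega⟩ : {P : Finset (Finset ℕ) // IsLinkedPartition n P ∧ P.card = k}))
  constructor
  · intro a b hab
    apply Subtype.ext
    exact LPofCode_injective (congrArg Subtype.val hab)
  · rintro ⟨P, hP, hcard⟩
    refine ⟨⟨codeOfLP n P, ?_⟩, ?_⟩
    · have h1 := minset_card (codeOfLP n P)
      have h2 : (LPofCode (codeOfLP n P)).card = k := by
        rw [LPofCode_codeOfLP hP]; exact hcard
      rw [card_LPofCode] at h2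
      omega
    · apply Subtype.ext
      exact LPofCode_codeOfLP hP


/-- The number of linked partitions of `[n]` with exactly `k` blocks equals
the number of permutations of `[n]` with exactly `k - 1` descents. -/
theorem linkedPartitions_blocks_eq_perms_descents (n k : ℕ)
    (hn : 1 ≤ n) (hk : 1 ≤ k) (hkn : k ≤ n) :
    Nat.card {P : Finset (Finset ℕ) // IsLinkedPartition n P ∧ P.card = k} =
      Nat.card {π : Equiv.Perm (Fin n) // (descentSet π).ncard = k - 1} := by
  rw [part_code_card hk hkn, ← perm_code_count n (n - k), count_rev hk hkn]
  apply Nat.card_congr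
  exact Equiv.subtypeEquivRight (fun π => by rw [descentSet_ncard])
end

section
/- For all integers n ≥ 1, the total number of linked partitions of [n] equals n!. -/
namespace LPaux
open Classical
noncomputable section

/-- Valid arc-choice functions. -/
def Ok (n : ℕ) (g : ℕ → ℕ) : Prop :=
  (∀ x ∈ Finset.Icc 1 n, g x < x) ∧ ∀ x, x ∉ Finset.Icc 1 n → g x = 0

def blockOf (n : ℕ) (g : ℕ → ℕ) (i : ℕ) : Finset ℕ :=
  insert i ((Finset.Icc 1 n).filter (fun x => g x = i))

def blocksOf (n : ℕ) (g : ℕ → ℕ) : Finset (Finset ℕ) :=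
  ((Finset.Icc 1 n).filter
    (fun i => g i = 0 ∨ ∃ x ∈ Finset.Icc 1 n, g x = i)).image (blockOf n g)

lemma mem_blockOf {n : ℕ} {g : ℕ → ℕ} {i x : ℕ} :
    x ∈ blockOf n g i ↔ x = i ∨ (x ∈ Finset.Icc 1 n ∧ g x = i) := by
  simp [blockOf, Finset.mem_insert, Finset.mem_filter]

lemma min_blockOf {n : ℕ} {g : ℕ → ℕ} (hg : Ok n g) {i x : ℕ}
    (hx : x ∈ blockOf n g i) : i ≤ x := by
  rcases mem_blockOf.mp hx with rfl | ⟨hxI, hgx⟩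
  · exact le_refl _
  · have := hg.1 x hxI; omega

lemma mem_blocksOf {n : ℕ} {g : ℕ → ℕ} {B : Finset ℕ} :
    B ∈ blocksOf n g ↔ ∃ i ∈ Finset.Icc 1 n,
      (g i = 0 ∨ ∃ x ∈ Finset.Icc 1 n, g x = i) ∧ B = blockOf n g i := by
  simp only [blocksOf, Finset.mem_image, Finset.mem_filter]
  constructor
  · rintro ⟨i, ⟨hi, hp⟩, rfl⟩; exact ⟨i, hi, hp, rfl⟩
  · rintro ⟨i, hi, hp, rfl⟩; exact ⟨i, ⟨hi, hp⟩, rfl⟩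


lemma blocksOf_linked {n : ℕ} {g : ℕ → ℕ} (hg : Ok n g) :
    IsLinkedPartition n (blocksOf n g) := by
  refine ⟨?_, ?_, ?_⟩
  · intro B hB
    obtain ⟨i, hi, _, rfl⟩ := mem_blocksOf.mp hB
    refine ⟨⟨i, mem_blockOf.mpr (Or.inl rfl)⟩, ?_⟩
    intro x hx
    rcases mem_blockOf.mp hx with rfl | ⟨hxI, _⟩
    · exact hi
    · exact hxI
  · intro x hx
    rcases Nat.eq_zero_or_pos (g x) with h0 | hpos
    · exact ⟨blockOf n g x, mem_blocksOf.mpr ⟨x, hx, Or.inl h0, rfl⟩,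
        mem_blockOf.mpr (Or.inl rfl)⟩
    · refine ⟨blockOf n g (g x), mem_blocksOf.mpr ⟨g x, ?_, Or.inr ⟨x, hx, rfl⟩, rfl⟩,
        mem_blockOf.mpr (Or.inr ⟨hx, rfl⟩)⟩
      have h1 := hg.1 x hx
      simp only [Finset.mem_Icc] at hx ⊢
      omega
  · intro B hB C hC hne x hx
    obtain ⟨i, hi, hpi, rfl⟩ := mem_blocksOf.mp hB
    obtain ⟨j, hj, hpj, rfl⟩ := mem_blocksOf.mp hC
    have hij : i ≠ j := fun h => hne (by rw [h])
    rw [Finset.mem_inter] at hx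
    rcases mem_blockOf.mp hx.1 with rfl | ⟨hxI, hgx⟩
    · -- x = i, and x ∈ blockOf j
      rcases mem_blockOf.mp hx.2 with h | ⟨hxI, hgx⟩
      · exact absurd h hij
      · -- g i = j ≠ 0, so pred i gives a witness
        have hj1 : 1 ≤ j := (Finset.mem_Icc.mp hj).1
        rcases hpi with h0 | ⟨z, hz, hgz⟩
        · omega
        · have hzi : x < z := by have := hg.1 z hz; omega
          left
          refine ⟨fun y hy => min_blockOf hg hy, ?_, ⟨j, mem_blockOf.mpr (Or.inl rfl), ?_⟩⟩
          · exact Finset.one_lt_card.mpr ⟨x, mem_blockOf.mpr (Or.inl rfl), z,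
              mem_blockOf.mpr (Or.inr ⟨hz, hgz⟩), by omega⟩
          · have := hg.1 x hxI; omega
    · rcases mem_blockOf.mp hx.2 with rfl | ⟨hxI', hgx'⟩
      · -- x = j, g j = i
        have hi1 : 1 ≤ i := (Finset.mem_Icc.mp hi).1
        rcases hpj with h0 | ⟨z, hz, hgz⟩
        · omega
        · have hzj : x < z := by have := hg.1 z hz; omega
          right
          refine ⟨fun y hy => min_blockOf hg hy, ?_, ⟨i, mem_blockOf.mpr (Or.inl rfl), ?_⟩⟩
          · exact Finset.one_lt_card.mpr ⟨x, mem_blockOf.mpr (Or.inl rfl), z,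
              mem_blockOf.mpr (Or.inr ⟨hz, hgz⟩), by omega⟩
          · have := hg.1 x hxI; omega
      · exact absurd (hgx ▸ hgx') hij

lemma g_eq_iff {n : ℕ} {g : ℕ → ℕ} (hg : Ok n g) {x i : ℕ}
    (hx : x ∈ Finset.Icc 1 n) (hi : 1 ≤ i) :
    g x = i ↔ ∃ B ∈ blocksOf n g, x ∈ B ∧ i ∈ B ∧ i < x ∧ ∀ y ∈ B, i ≤ y := by
  constructor
  · intro h
    have hix : i < x := by have := hg.1 x hx; omega
    have hiI : i ∈ Finset.Icc 1 n := by
      simp only [Finset.mem_Icc] at hx ⊢; omega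
    exact ⟨blockOf n g i, mem_blocksOf.mpr ⟨i, hiI, Or.inr ⟨x, hx, h⟩, rfl⟩,
      mem_blockOf.mpr (Or.inr ⟨hx, h⟩), mem_blockOf.mpr (Or.inl rfl), hix,
      fun y hy => min_blockOf hg hy⟩
  · rintro ⟨B, hB, hxB, hiB, hix, hmin⟩
    obtain ⟨j, hj, hpj, rfl⟩ := mem_blocksOf.mp hB
    have hji : j ≤ i := min_blockOf hg hiB
    have hij : i ≤ j := hmin j (mem_blockOf.mpr (Or.inl rfl))
    have : i = j := le_antisymm hij hji
    subst this
    rcases mem_blockOf.mp hxB with rfl | ⟨_, hgx⟩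
    · omega
    · exact hgx

lemma blocksOf_injOn {n : ℕ} {g g' : ℕ → ℕ} (hg : Ok n g) (hg' : Ok n g')
    (h : blocksOf n g = blocksOf n g') : g = g' := by
  funext x
  by_cases hx : x ∈ Finset.Icc 1 n
  · rcases Nat.eq_zero_or_pos (g x) with h0 | hpos
    · rcases Nat.eq_zero_or_pos (g' x) with h0' | hpos'
      · omega
      · have := (g_eq_iff hg' hx hpos').mp rfl
        rw [← h] at this
        have := (g_eq_iff hg hx hpos').mpr this
        omega
    · have := (g_eq_iff hg hx hpos).mp rfl
      rw [h] at this
      exact ((g_eq_iff hg' hx hpos).mpr this).symm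
  · rw [hg.2 x hx, hg'.2 x hx]


section Surj

variable {n : ℕ} {P : Finset (Finset ℕ)}

/-- If x lies in two blocks, in each with a smaller element, the blocks agree. -/
lemma uniq_nonmin (hP : IsLinkedPartition n P) {B C : Finset ℕ} {x : ℕ}
    (hB : B ∈ P) (hC : C ∈ P) (hxB : x ∈ B) (hxC : x ∈ C)
    (hyB : ∃ y ∈ B, y < x) (hyC : ∃ y ∈ C, y < x) : B = C := by
  by_contra hne
  rcases hP.2.2 B hB C hC hne x (Finset.mem_inter.mpr ⟨hxB, hxC⟩) with
    ⟨h1, _, _⟩ | ⟨h1, _, _⟩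
  · obtain ⟨y, hy, hlt⟩ := hyB; exact absurd (h1 y hy) (by omega)
  · obtain ⟨y, hy, hlt⟩ := hyC; exact absurd (h1 y hy) (by omega)

/-- Two blocks with the same minimum agree. -/
lemma uniq_min (hP : IsLinkedPartition n P) {B C : Finset ℕ} {x : ℕ}
    (hB : B ∈ P) (hC : C ∈ P) (hxB : x ∈ B) (hxC : x ∈ C)
    (hyB : ∀ y ∈ B, x ≤ y) (hyC : ∀ y ∈ C, x ≤ y) : B = C := by
  by_contra hne
  rcases hP.2.2 B hB C hC hne x (Finset.mem_inter.mpr ⟨hxB, hxC⟩) with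
    ⟨_, _, y, hy, hlt⟩ | ⟨_, _, y, hy, hlt⟩
  · exact absurd (hyC y hy) (by omega)
  · exact absurd (hyB y hy) (by omega)

noncomputable def gOf (P : Finset (Finset ℕ)) : ℕ → ℕ := fun x =>
  if h : ∃ B, B ∈ P ∧ x ∈ B ∧ ∃ y ∈ B, y < x then
    h.choose.min' ⟨x, h.choose_spec.2.1⟩ else 0

lemma gOf_of_mem (hP : IsLinkedPartition n P) {B : Finset ℕ} {x y : ℕ}
    (hB : B ∈ P) (hxB : x ∈ B) (hy : y ∈ B) (hyx : y < x) :
    gOf P x ∈ B ∧ ∀ z ∈ B, gOf P x ≤ z := by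
  have h : ∃ C, C ∈ P ∧ x ∈ C ∧ ∃ y ∈ C, y < x := ⟨B, hB, hxB, y, hy, hyx⟩
  obtain ⟨hCP, hxC, hyC⟩ := h.choose_spec
  have hBC : h.choose = B := uniq_nonmin hP hCP hB hxC hxB hyC ⟨y, hy, hyx⟩
  have heq : gOf P x = B.min' ⟨x, hxB⟩ := by
    rw [gOf, dif_pos h]
    congr 1
  rw [heq]
  exact ⟨Finset.min'_mem _ _, fun z hz => Finset.min'_le _ _ hz⟩

lemma gOf_zero (hP : IsLinkedPartition n P) {B : Finset ℕ} {x : ℕ}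
    (h0 : gOf P x = 0) (hB : B ∈ P) (hxB : x ∈ B) : ∀ y ∈ B, x ≤ y := by
  intro y hy
  by_contra hlt
  push_neg at hlt
  have := (gOf_of_mem hP hB hxB hy hlt).1
  have := (hP.1 B hB).2 this
  rw [h0] at this
  simp [Finset.mem_Icc] at this

lemma gOf_pos_spec (hP : IsLinkedPartition n P) {x : ℕ} (hpos : 0 < gOf P x) :
    ∃ B ∈ P, x ∈ B ∧ gOf P x ∈ B ∧ gOf P x < x ∧ ∀ z ∈ B, gOf P x ≤ z := by
  by_cases h : ∃ B, B ∈ P ∧ x ∈ B ∧ ∃ y ∈ B, y < x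
  · obtain ⟨hCP, hxC, y, hy, hyx⟩ := h.choose_spec
    obtain ⟨hmem, hmin⟩ := gOf_of_mem hP hCP hxC hy hyx
    exact ⟨h.choose, hCP, hxC, hmem, lt_of_le_of_lt (hmin y hy) hyx, hmin⟩
  · rw [gOf, dif_neg h] at hpos; omega

lemma gOf_ok (hP : IsLinkedPartition n P) : Ok n (gOf P) := by
  constructor
  · intro x hx
    rcases Nat.eq_zero_or_pos (gOf P x) with h0 | hpos
    · rw [h0]; exact (Finset.mem_Icc.mp hx).1
    · exact (gOf_pos_spec hP hpos).choose_spec.2.2.2.1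
  · intro x hx
    rcases Nat.eq_zero_or_pos (gOf P x) with h0 | hpos
    · exact h0
    · obtain ⟨B, hB, hxB, _⟩ := gOf_pos_spec hP hpos
      exact absurd ((hP.1 B hB).2 hxB) hx

lemma blocksOf_gOf (hP : IsLinkedPartition n P) : blocksOf n (gOf P) = P := by
  have hok := gOf_ok hP
  apply Finset.Subset.antisymm
  · intro B hB
    obtain ⟨i, hi, hpi, rfl⟩ := mem_blocksOf.mp hB
    by_cases hne : ∃ x ∈ Finset.Icc 1 n, gOf P x = i
    · obtain ⟨x, hx, hgx⟩ := hne
      have hpos : 0 < gOf P x := by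
        rw [hgx]; exact (Finset.mem_Icc.mp hi).1
      obtain ⟨C, hC, hxC, hiC, hix, hmin⟩ := gOf_pos_spec hP hpos
      rw [hgx] at hiC hix hmin
      suffices hBC : blockOf n (gOf P) i = C by rw [hBC]; exact hC
      ext z
      rw [mem_blockOf]
      constructor
      · rintro (rfl | ⟨hzI, hgz⟩)
        · exact hiC
        · -- z ∈ some block D with min i; D = C by uniq_min
          have hzpos : 0 < gOf P z := by rw [hgz]; exact (Finset.mem_Icc.mp hi).1
          obtain ⟨D, hD, hzD, hiD, _, hminD⟩ := gOf_pos_spec hP hzpos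
          rw [hgz] at hiD hminD
          rw [← uniq_min hP hD hC hiD hiC hminD hmin]
          exact hzD
      · intro hzC
        rcases eq_or_ne z i with rfl | hzi
        · exact Or.inl rfl
        · have hiz : i < z := lt_of_le_of_ne (hmin z hzC) (Ne.symm hzi)
          have := gOf_of_mem hP hC hzC hiC hiz
          have hgz : gOf P z = i :=
            le_antisymm (this.2 i hiC) (hmin _ this.1)
          exact Or.inr ⟨(hP.1 C hC).2 hzC, hgz⟩
    · -- singleton case
      push_neg at hne
      have h0 : gOf P i = 0 := by
        rcases hpi with h0 | ⟨x, hx, hgx⟩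
        · exact h0
        · exact absurd hgx (hne x hx)
      obtain ⟨C, hC, hiC⟩ := hP.2.1 i hi
      have hmin : ∀ y ∈ C, i ≤ y := gOf_zero hP h0 hC hiC
      have hCi : C = {i} := by
        ext z
        simp only [Finset.mem_singleton]
        constructor
        · intro hzC
          by_contra hzi
          have hiz : i < z := lt_of_le_of_ne (hmin z hzC) (Ne.symm hzi)
          have hzspec := gOf_of_mem hP hC hzC hiC hiz
          have hgz : gOf P z = i := le_antisymm (hzspec.2 i hiC) (hmin _ hzspec.1)
          exact absurd hgz (hne z ((hP.1 C hC).2 hzC))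
        · rintro rfl; exact hiC
      have : blockOf n (gOf P) i = {i} := by
        ext z
        rw [mem_blockOf]
        simp only [Finset.mem_singleton]
        constructor
        · rintro (rfl | ⟨hzI, hgz⟩)
          · rfl
          · exact absurd hgz (hne z hzI)
        · rintro rfl; exact Or.inl rfl
      rw [this, ← hCi]; exact hC
  · intro C hC
    obtain ⟨⟨w, hw⟩, hsub⟩ := hP.1 C hC
    set i := C.min' ⟨w, hw⟩ with hidef
    have hiC : i ∈ C := Finset.min'_mem _ _
    have hmin : ∀ y ∈ C, i ≤ y := fun y hy => Finset.min'_le _ _ hy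
    have hiI : i ∈ Finset.Icc 1 n := hsub hiC
    have key : ∀ z ∈ C, z ≠ i → gOf P z = i := by
      intro z hzC hzi
      have hiz : i < z := lt_of_le_of_ne (hmin z hzC) (Ne.symm hzi)
      have hzspec := gOf_of_mem hP hC hzC hiC hiz
      exact le_antisymm (hzspec.2 i hiC) (hmin _ hzspec.1)
    have hCeq : C = blockOf n (gOf P) i := by
      ext z
      rw [mem_blockOf]
      constructor
      · intro hzC
        rcases eq_or_ne z i with rfl | hzi
        · exact Or.inl rfl
        · exact Or.inr ⟨hsub hzC, key z hzC hzi⟩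
      · rintro (rfl | ⟨hzI, hgz⟩)
        · exact hiC
        · have hzpos : 0 < gOf P z := by
            rw [hgz]; exact (Finset.mem_Icc.mp hiI).1
          obtain ⟨D, hD, hzD, hiD, _, hminD⟩ := gOf_pos_spec hP hzpos
          rw [hgz] at hiD hminD
          rw [uniq_min hP hC hD hiC hiD hmin hminD]
          exact hzD
    have hpred : gOf P i = 0 ∨ ∃ x ∈ Finset.Icc 1 n, gOf P x = i := by
      rcases eq_or_ne C {i} with hCsing | hCne
      · left
        by_contra h0
        have hpos : 0 < gOf P i := Nat.pos_of_ne_zero h0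
        obtain ⟨D, hD, hiD, hgD, hgi, hminD⟩ := gOf_pos_spec hP hpos
        have hne : C ≠ D := by
          intro h
          rw [← h, hCsing] at hgD
          simp only [Finset.mem_singleton] at hgD
          omega
        rcases hP.2.2 C hC D hD hne i (Finset.mem_inter.mpr ⟨hiC, hiD⟩) with
          ⟨_, hcard, _⟩ | ⟨hminD', _, _⟩
        · rw [hCsing] at hcard; simp at hcard
        · have := hminD' _ hgD; omega
      · -- C has an element ≠ i
        right
        have : ∃ z ∈ C, z ≠ i := by
          by_contra hno
          push_neg at hno
          exact hCne (Finset.eq_singleton_iff_unique_mem.mpr ⟨hiC, hno⟩)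
        obtain ⟨z, hzC, hzi⟩ := this
        exact ⟨z, hsub hzC, key z hzC hzi⟩
    exact mem_blocksOf.mpr ⟨i, hiI, hpred, hCeq⟩

end Surj

noncomputable def okEquiv (n : ℕ) :
    {g : ℕ → ℕ // Ok n g} ≃ (∀ i : Fin n, Fin ((i : ℕ) + 1)) where
  toFun g i := ⟨g.1 ((i : ℕ) + 1), by
    have hi := i.isLt
    have := g.2.1 ((i : ℕ) + 1) (Finset.mem_Icc.mpr ⟨by omega, by omega⟩)
    omega⟩
  invFun f := ⟨fun x => if hx : x ∈ Finset.Icc 1 n then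
      (f ⟨x - 1, by have := (Finset.mem_Icc.mp hx); omega⟩ : ℕ) else 0, by
    constructor
    · intro x hx
      simp only [dif_pos hx]
      have h1 := (Finset.mem_Icc.mp hx).1
      exact lt_of_lt_of_le (Fin.is_lt _) (by omega)
    · intro x hx
      simp only [dif_neg hx]⟩
  left_inv g := by
    apply Subtype.ext
    funext x
    by_cases hx : x ∈ Finset.Icc 1 n
    · simp only [dif_pos hx]
      have h1 := (Finset.mem_Icc.mp hx).1
      have hxx : x - 1 + 1 = x := by omega
      simp only [hxx]
    · simp only [dif_neg hx]
      exact (g.2.2 x hx).symm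
  right_inv f := by
    funext i
    apply Fin.ext
    have hi := i.isLt
    have hmem : (i : ℕ) + 1 ∈ Finset.Icc 1 n := Finset.mem_Icc.mpr ⟨by omega, by omega⟩
    simp only [dif_pos hmem]
    rfl

end
end LPaux

/-- The total number of linked partitions of `[n]` equals `n!`. -/
theorem card_linkedPartitions_eq_factorial (n : ℕ) (hn : 1 ≤ n) :
    Nat.card {P : Finset (Finset ℕ) // IsLinkedPartition n P} = Nat.factorial n := by
  have hbij : Function.Bijective
      (fun g : {g : ℕ → ℕ // LPaux.Ok n g} =>
        (⟨LPaux.blocksOf n g.1, LPaux.blocksOf_linked g.2⟩ :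
          {P : Finset (Finset ℕ) // IsLinkedPartition n P})) := by
    constructor
    · intro g g' h
      exact Subtype.ext (LPaux.blocksOf_injOn g.2 g'.2 (congrArg Subtype.val h))
    · intro ⟨P, hP⟩
      exact ⟨⟨LPaux.gOf P, LPaux.gOf_ok hP⟩, Subtype.ext (LPaux.blocksOf_gOf hP)⟩
  rw [← Nat.card_eq_of_bijective _ hbij, Nat.card_congr (LPaux.okEquiv n),
    Nat.card_eq_fintype_card, Fintype.card_pi]
  simp only [Fintype.card_fin]
  rw [Fin.prod_univ_eq_prod_range (fun i => i + 1) n]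
  exact Finset.prod_range_add_one_eq_factorial n
end

section
/- Two permutation tableaux of the same shape that have the same set of positions of topmost 1's and the same set of positions of rightmost restricted 0's are equal; i.e., a permutation tableau is uniquely determined by its shape, its topmost 1's and its rightmost restricted 0's. -/
namespace PermTableau

variable {n : ℕ}

private lemma fin_exists_min {p : Fin n → Prop} (h : ∃ i, p i) :
    ∃ m, p m ∧ ∀ k, p k → m ≤ k := by
  classical
  obtain ⟨i, hi⟩ := h
  have hne : (Finset.univ.filter p).Nonempty := ⟨i, by simp [hi]⟩
  refine ⟨(Finset.univ.filter p).min' hne, ?_, ?_⟩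
  · have := Finset.min'_mem _ hne; simpa using this
  · intro k hk
    exact Finset.min'_le _ _ (by simp [hk])

lemma exists_topmost_le {T : PermTableau n} {i j : Fin n}
    (h : T.filling i j = true) : ∃ t, T.TopmostOne t j ∧ t ≤ i := by
  obtain ⟨m, hm, hmin⟩ := fin_exists_min (p := fun k => T.filling k j = true) ⟨i, h⟩
  refine ⟨m, ⟨hm, fun i' hi' => ?_⟩, hmin i h⟩
  cases hb : T.filling i' j with
  | false => rfl
  | true => exact absurd (hmin i' hb) (not_le.mpr hi')

lemma exists_rrz {T : PermTableau n} {i j : Fin n}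
    (h : T.RestrictedZero i j) : ∃ j₀, T.RightmostRestrictedZero i j₀ ∧ j₀ ≤ j := by
  obtain ⟨m, hm, hmin⟩ := fin_exists_min (p := fun j' => T.RestrictedZero i j') ⟨j, h⟩
  exact ⟨m, ⟨hm, hmin⟩, hmin j h⟩

/-- The value of a cell is determined by the topmost ones and the rightmost
restricted zeros. -/
def Det (T : PermTableau n) (i j : Fin n) : Prop :=
  T.TopmostOne i j ∨ (T.IsCell i j ∧ (∃ i', i' < i ∧ T.TopmostOne i' j) ∧
    ¬ ∃ j₀, T.RightmostRestrictedZero i j₀ ∧ j₀ ≤ j)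

lemma filling_iff_det (T : PermTableau n) (i j : Fin n) :
    T.filling i j = true ↔ T.Det i j := by
  constructor
  · intro h
    by_cases htop : ∀ i' : Fin n, i' < i → T.filling i' j = false
    · exact Or.inl ⟨h, htop⟩
    · push_neg at htop
      obtain ⟨i', hi', hne⟩ := htop
      have hfi' : T.filling i' j = true := by
        cases hb : T.filling i' j with
        | false => exact absurd hb hne
        | true => rfl
      right
      refine ⟨T.filling_cells i j h, ?_, ?_⟩
      · obtain ⟨t, ht, hti⟩ := exists_topmost_le hfi'
        exact ⟨t, lt_of_le_of_lt hti hi', ht⟩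
      · rintro ⟨j₀, ⟨⟨hcell, hz, i'', hi'', h1⟩, -⟩, hle⟩
        have hne' : j₀ ≠ j := by
          intro e; rw [e] at hz; rw [h] at hz; simp at hz
        have hlt : j₀ < j := lt_of_le_of_ne hle hne'
        have := T.no_bad_zero i j₀ hcell.1 hcell.2.1 hcell.2.2
          ⟨i'', hi'', h1⟩ ⟨j, hlt, h⟩
        rw [this] at hz
        simp at hz
  · rintro (⟨h, -⟩ | ⟨hcell, ⟨i', hi', ht⟩, hnr⟩)
    · exact h
    · by_contra hne
      have hz : T.filling i j = false := by
        cases hb : T.filling i j with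
        | false => rfl
        | true => exact absurd hb hne
      exact hnr (exists_rrz ⟨hcell, hz, i', hi', ht.1⟩)

lemma ext_tableau {T₁ T₂ : PermTableau n} (h1 : T₁.isRow = T₂.isRow)
    (h2 : T₁.filling = T₂.filling) : T₁ = T₂ := by
  cases T₁; cases T₂
  cases h1; cases h2
  rfl

end PermTableau

/-- A permutation tableau is uniquely determined by its shape, its topmost
`1`'s and its rightmost restricted `0`'s. -/
theorem permTableau_determined_by_topmostOnes_and_rrz (n : ℕ)
    (T₁ T₂ : PermTableau n) (hshape : T₁.isRow = T₂.isRow)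
    (htop : ∀ i j : Fin n, T₁.TopmostOne i j ↔ T₂.TopmostOne i j)
    (hrrz : ∀ i j : Fin n,
      T₁.RightmostRestrictedZero i j ↔ T₂.RightmostRestrictedZero i j) :
    T₁ = T₂ := by
  apply PermTableau.ext_tableau hshape
  funext i j
  have hdet : T₁.Det i j ↔ T₂.Det i j := by
    unfold PermTableau.Det PermTableau.IsCell
    rw [hshape]
    constructor
    · rintro (h | ⟨hc, ⟨i', hi', ht⟩, hnr⟩)
      · exact Or.inl ((htop i j).mp h)
      · refine Or.inr ⟨hc, ⟨i', hi', (htop i' j).mp ht⟩, ?_⟩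
        rintro ⟨j₀, hr, hle⟩
        exact hnr ⟨j₀, (hrrz i j₀).mpr hr, hle⟩
    · rintro (h | ⟨hc, ⟨i', hi', ht⟩, hnr⟩)
      · exact Or.inl ((htop i j).mpr h)
      · refine Or.inr ⟨hc, ⟨i', hi', (htop i' j).mpr ht⟩, ?_⟩
        rintro ⟨j₀, hr, hle⟩
        exact hnr ⟨j₀, (hrrz i j₀).mp hr, hle⟩
  have h1 := T₁.filling_iff_det i j
  have h2 := T₂.filling_iff_det i j
  cases hb1 : T₁.filling i j with
  | true => exact ((h2.mpr (hdet.mp (h1.mp hb1)))).symm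
  | false =>
    cases hb2 : T₂.filling i j with
    | true => exact absurd (h1.mpr (hdet.mpr (h2.mp hb2))) (by simp [hb1])
    | false => rfl
end
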